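/- arXiv:1002.2440 — 10 statements merged into one kernel-verified Lean document; each statement's English description precedes it below -/
import Mathlib

section
/- If a projective deterministic list update algorithm A is strictly c-competitive on lists with two items, then A is strictly c-competitive on lists of arbitrary length (in the partial cost model). -/
/-- `x` is in front of `y` in list state `L`. -/
abbrev Before {I : Type} [DecidableEq I] (x y : I) (L : List I) : Prop :=
  L.idxOf x < L.idxOf y

/-- Projection of a request sequence to the requests to `x` and `y`. -/
def proj2 {I : Type} [DecidableEq I] (x y : I) (σ : List I) : List I :=
  σ.filter (fun z => decide (z = x ∨ z = y))

/-- Number of (unordered) pairs whose relative order differs between `L` and `M`,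
i.e. the minimal number of adjacent transpositions (Kendall tau distance). -/
def numInv {I : Type} [DecidableEq I] (L M : List I) : ℕ :=
  ((L.product L).filter
    (fun p => decide (L.idxOf p.1 < L.idxOf p.2 ∧ M.idxOf p.2 < M.idxOf p.1))).length

/-- Total cost, in the partial cost model, of serving `σ` with the online algorithm
whose state function is `S`: for each request `z` after prefix `pref`, pay the number
of paid exchanges from `S pref` to `S (pref ++ [z])` plus the position of `z` there. -/
def totalCostAux {I : Type} [DecidableEq I] (S : List I → List I) :
    List I → List I → ℕ
  | _, [] => 0
  | pref, z :: rest =>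
      numInv (S pref) (S (pref ++ [z])) + (S (pref ++ [z])).idxOf z
        + totalCostAux S (pref ++ [z]) rest

def totalCost {I : Type} [DecidableEq I] (S : List I → List I) (σ : List I) : ℕ :=
  totalCostAux S [] σ

/-- Projected pairwise cost `A_{xy}(σ)`: exchanges of the pair `x,y` plus accesses to a
member of the pair that is behind the other one. -/
def pairCostAux {I : Type} [DecidableEq I] (S : List I → List I) (x y : I) :
    List I → List I → ℕ
  | _, [] => 0
  | pref, z :: rest =>
      (if (Before x y (S pref) ∧ Before y x (S (pref ++ [z]))) ∨
          (Before y x (S pref) ∧ Before x y (S (pref ++ [z]))) then 1 else 0)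
      + (if (z = x ∧ Before y x (S (pref ++ [z]))) ∨
           (z = y ∧ Before x y (S (pref ++ [z]))) then 1 else 0)
      + pairCostAux S x y (pref ++ [z]) rest

def pairCost {I : Type} [DecidableEq I] (S : List I → List I) (x y : I) (σ : List I) : ℕ :=
  pairCostAux S x y [] σ

/-- Optimal offline cost of serving `σ` starting from list state `L0`. -/
noncomputable def optCost {I : Type} [DecidableEq I] (L0 σ : List I) : ℕ :=
  sInf { c | ∃ S : List I → List I, S [] = L0 ∧ (∀ τ, (S τ).Perm L0) ∧ totalCost S σ = c }

/-- A deterministic algorithm is projective if the relative order of any two items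
depends only on the requests to these two items. -/
def Projective {I : Type} [DecidableEq I] (S : List I → List I) : Prop :=
  ∀ (x y : I) (σ : List I), Before x y (S σ) ↔ Before x y (S (proj2 x y σ))

namespace LU
variable {I : Type} [DecidableEq I]

lemma before_asymm {x y : I} {L : List I} (h1 : Before x y L) (h2 : Before y x L) : False :=
  absurd (h1.trans h2) (lt_irrefl _)

lemma before_or {x y : I} {L : List I} (hx : x ∈ L) (hy : y ∈ L) (hxy : x ≠ y) :
    Before x y L ∨ Before y x L := by
  rcases lt_trichotomy (L.idxOf x) (L.idxOf y) with h|h|h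
  · exact Or.inl h
  · exact absurd ((List.idxOf_inj hx).1 h) hxy
  · exact Or.inr h

lemma before_ne {x y : I} {L : List I} (h : Before x y L) : x ≠ y := by
  rintro rfl; exact lt_irrefl _ h

lemma proj2_append (x y : I) (a b : List I) :
    proj2 x y (a ++ b) = proj2 x y a ++ proj2 x y b := List.filter_append _ _

lemma proj2_nil (x y : I) : proj2 x y [] = [] := rfl

lemma proj2_cons_pair {x y z : I} (h : z = x ∨ z = y) (l : List I) :
    proj2 x y (z :: l) = z :: proj2 x y l := by
  simp [proj2, List.filter_cons, h]

lemma proj2_cons_not {x y z : I} (h : ¬(z = x ∨ z = y)) (l : List I) :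
    proj2 x y (z :: l) = proj2 x y l := by
  simp [proj2, List.filter_cons, h]

lemma mem_proj2 {x y z : I} {l : List I} (h : z ∈ proj2 x y l) : z = x ∨ z = y := by
  have := (List.mem_filter.1 h).2
  simpa using this

lemma proj2_comm (x y : I) (l : List I) : proj2 x y l = proj2 y x l := by
  apply List.filter_congr
  intro z _
  simp [or_comm]

lemma proj2_eq_nil {x y : I} {l : List I} (hx : x ∉ l) (hy : y ∉ l) :
    proj2 x y l = [] := by
  apply List.filter_eq_nil_iff.2
  intro a ha
  simp only [decide_eq_true_eq]
  rintro (rfl|rfl) <;> [exact hx ha; exact hy ha]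

lemma proj2_single {x y : I} {l : List I} (hnd : l.Nodup) (hy : y ∈ l) (hx : x ∉ l) :
    proj2 x y l = [y] := by
  induction l with
  | nil => cases hy
  | cons z l ih =>
    have hxz : z ≠ x := by rintro rfl; exact hx (List.mem_cons_self)
    by_cases hzy : z = y
    · subst hzy
      rw [proj2_cons_pair (Or.inr rfl)]
      rw [proj2_eq_nil (fun h => hx (List.mem_cons_of_mem _ h)) (List.nodup_cons.1 hnd).1]
    · rw [proj2_cons_not (by tauto)]
      exact ih (List.nodup_cons.1 hnd).2 (by rcases List.mem_cons.1 hy with h|h; exact absurd h.symm hzy; exact h)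
        (fun h => hx (List.mem_cons_of_mem _ h))

lemma proj2_pair {x y : I} {l : List I} (hnd : l.Nodup) (hx : x ∈ l) (hy : y ∈ l)
    (hb : Before x y l) : proj2 x y l = [x, y] := by
  induction l with
  | nil => cases hx
  | cons z l ih =>
    have hxy : x ≠ y := before_ne hb
    by_cases hzx : z = x
    · subst hzx
      rw [proj2_cons_pair (Or.inl rfl)]
      have hyl : y ∈ l := by rcases List.mem_cons.1 hy with h|h; exact absurd h.symm hxy; exact h
      rw [proj2_single (List.nodup_cons.1 hnd).2 hyl (List.nodup_cons.1 hnd).1]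
    · by_cases hzy : z = y
      · subst hzy
        exfalso
        have h1 : (z :: l).idxOf z = 0 := List.idxOf_cons_self
        have h2 : (z :: l).idxOf x = (l.idxOf x) + 1 := List.idxOf_cons_ne _ hzx
        unfold Before at hb
        omega
      · rw [proj2_cons_not (by tauto)]
        have hxl : x ∈ l := by rcases List.mem_cons.1 hx with h|h; exact absurd h.symm hzx; exact h
        have hyl : y ∈ l := by rcases List.mem_cons.1 hy with h|h; exact absurd h.symm hzy; exact h
        apply ih (List.nodup_cons.1 hnd).2 hxl hyl
        unfold Before at hb ⊢
        rw [List.idxOf_cons_ne _ hzx, List.idxOf_cons_ne _ hzy] at hb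
        omega

end LU

namespace LU
variable {I : Type} [DecidableEq I]

lemma toFinset_product (l1 l2 : List I) :
    (l1.product l2).toFinset = l1.toFinset ×ˢ l2.toFinset := by
  ext ⟨a, b⟩
  simp [List.mem_product, Finset.mem_product]

lemma sum_pair_split (L0 : List I) (hnd : L0.Nodup) (f : I × I → ℕ)
    (hdiag : ∀ a, f (a, a) = 0) :
    ∑ p ∈ L0.toFinset ×ˢ L0.toFinset, f p
      = ∑ p ∈ (L0.toFinset ×ˢ L0.toFinset).filter
          (fun p => L0.idxOf p.1 < L0.idxOf p.2), (f p + f p.swap) := by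
  classical
  rw [← Finset.sum_filter_add_sum_filter_not (L0.toFinset ×ˢ L0.toFinset)
    (fun p => L0.idxOf p.1 < L0.idxOf p.2) f]
  rw [Finset.sum_add_distrib]
  congr 1
  have hsub : (L0.toFinset ×ˢ L0.toFinset).filter
      (fun p => L0.idxOf p.2 < L0.idxOf p.1) ⊆
      (L0.toFinset ×ˢ L0.toFinset).filter
      (fun p => ¬ L0.idxOf p.1 < L0.idxOf p.2) := by
    intro p hp
    simp only [Finset.mem_filter] at *
    exact ⟨hp.1, by omega⟩
  rw [← Finset.sum_subset hsub ?_]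
  · apply Finset.sum_nbij' (i := Prod.swap) (j := Prod.swap)
    · intro p hp
      simp only [Finset.mem_filter, Finset.mem_product, Prod.fst_swap, Prod.snd_swap] at *
      exact ⟨⟨hp.1.2, hp.1.1⟩, hp.2⟩
    · intro p hp
      simp only [Finset.mem_filter, Finset.mem_product, Prod.fst_swap, Prod.snd_swap] at *
      exact ⟨⟨hp.1.2, hp.1.1⟩, hp.2⟩
    · intro p _; rfl
    · intro p _; rfl
    · intro p _; rfl
  · intro p hpF hnp
    simp only [Finset.mem_filter, Finset.mem_product, List.mem_toFinset, not_and, not_lt] at hpF hnp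
    have heq : p.1 = p.2 := by
      have h1 := hnp hpF.1
      have := hpF.2
      exact (List.idxOf_inj hpF.1.1).1 (by omega)
    have : p = (p.1, p.1) := by
      rw [Prod.ext_iff]; exact ⟨rfl, heq.symm⟩
    rw [this, hdiag]

lemma numInv_eq_sum (L0 : List I) (hnd : L0.Nodup) (L M : List I)
    (hL : L.Perm L0) (hM : M.Perm L0) :
    numInv L M = ∑ p ∈ (L0.toFinset ×ˢ L0.toFinset).filter
        (fun p => L0.idxOf p.1 < L0.idxOf p.2),
      (if (Before p.1 p.2 L ∧ Before p.2 p.1 M) ∨ (Before p.2 p.1 L ∧ Before p.1 p.2 M)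
        then 1 else 0) := by
  classical
  have hprod : (L.product L).Perm (L0.product L0) := hL.product hL
  have h1 : numInv L M = ((L0.product L0).filter
      (fun p => decide (L.idxOf p.1 < L.idxOf p.2 ∧ M.idxOf p.2 < M.idxOf p.1))).length :=
    (hprod.filter _).length_eq
  have hnd2 : (L0.product L0).Nodup := hnd.product hnd
  rw [h1, ← List.toFinset_card_of_nodup (hnd2.filter _), List.toFinset_filter, toFinset_product,
    Finset.card_filter]
  rw [sum_pair_split L0 hnd _ (by intro a; simp)]
  apply Finset.sum_congr rfl
  intro p hp
  by_cases hA : Before p.1 p.2 L ∧ Before p.2 p.1 M <;>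
    by_cases hB : Before p.2 p.1 L ∧ Before p.1 p.2 M
  · exact (before_asymm hA.1 hB.1).elim
  · simp [hA, hB]
  · simp [hA, hB]
  · simp [hA, hB]

lemma idxOf_eq_card (M : List I) (hndM : M.Nodup) (z : I) (hz : z ∈ M) :
    M.idxOf z = (M.toFinset.filter (fun a => Before a z M)).card := by
  classical
  have hk : M.idxOf z ≤ M.length := le_of_lt (List.idxOf_lt_length_iff.2 hz)
  have : (M.toFinset.filter (fun a => Before a z M)).card
      = (Finset.range (M.idxOf z)).card := by
    apply Finset.card_nbij' (i := fun a => M.idxOf a) (j := fun n => M.getD n z)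
    · intro a ha
      simp only [Finset.mem_coe, Finset.mem_filter, List.mem_toFinset] at ha
      simpa [Finset.mem_range] using ha.2
    · intro n hn
      beta_reduce
      simp only [Finset.mem_coe, Finset.mem_range] at hn
      have hn' : n < M.length := lt_of_lt_of_le hn hk
      rw [List.getD_eq_getElem _ _ hn']
      simp only [Finset.mem_coe, Finset.mem_filter, List.mem_toFinset]
      refine ⟨List.getElem_mem _, ?_⟩
      show M.idxOf M[n] < M.idxOf z
      rw [List.Nodup.idxOf_getElem hndM n hn']
      exact hn
    · intro a ha
      beta_reduce
      simp only [Finset.mem_coe, Finset.mem_filter, List.mem_toFinset] at ha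
      have h1 : M.idxOf a < M.length := List.idxOf_lt_length_iff.2 ha.1
      rw [List.getD_eq_getElem _ _ h1]
      exact List.getElem_idxOf h1
    · intro n hn
      beta_reduce
      simp only [Finset.mem_coe, Finset.mem_range] at hn
      have hn' : n < M.length := lt_of_lt_of_le hn hk
      rw [List.getD_eq_getElem _ _ hn']
      exact List.Nodup.idxOf_getElem hndM n hn'
  rw [this, Finset.card_range]

lemma idxOf_eq_sum (L0 : List I) (hnd : L0.Nodup) (M : List I) (hM : M.Perm L0)
    (z : I) (hz : z ∈ L0) :
    M.idxOf z = ∑ p ∈ (L0.toFinset ×ˢ L0.toFinset).filter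
        (fun p => L0.idxOf p.1 < L0.idxOf p.2),
      (if (z = p.1 ∧ Before p.2 p.1 M) ∨ (z = p.2 ∧ Before p.1 p.2 M) then 1 else 0) := by
  classical
  have hndM : M.Nodup := (hM.nodup_iff).2 hnd
  have hzM : z ∈ M := hM.mem_iff.2 hz
  have hMF : M.toFinset = L0.toFinset := List.toFinset_eq_of_perm _ _ hM
  rw [idxOf_eq_card M hndM z hzM, hMF, ← Finset.card_filter]
  apply Finset.card_nbij'
    (i := fun a => if L0.idxOf z < L0.idxOf a then (z, a) else (a, z))
    (j := fun p => if z = p.1 then p.2 else p.1)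
  · intro a ha
    beta_reduce
    simp only [Finset.mem_coe, Finset.mem_filter, List.mem_toFinset] at ha
    have haz : a ≠ z := before_ne ha.2
    have haz' : L0.idxOf a ≠ L0.idxOf z :=
      fun h => haz ((List.idxOf_inj ha.1).1 h)
    split_ifs with h
    · simp only [Finset.mem_coe, Finset.mem_filter, Finset.mem_product, List.mem_toFinset]
      exact ⟨⟨⟨hz, ha.1⟩, h⟩, by tauto⟩
    · simp only [Finset.mem_coe, Finset.mem_filter, Finset.mem_product, List.mem_toFinset]
      exact ⟨⟨⟨ha.1, hz⟩, by omega⟩, by tauto⟩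
  · intro p hp
    beta_reduce
    simp only [Finset.mem_coe, Finset.mem_filter, Finset.mem_product, List.mem_toFinset] at hp
    obtain ⟨⟨⟨h1, h2⟩, hlt⟩, hacc⟩ := hp
    rcases hacc with ⟨rfl, hB⟩ | ⟨rfl, hB⟩
    · rw [if_pos rfl]
      simp only [Finset.mem_coe, Finset.mem_filter, List.mem_toFinset]
      exact ⟨h2, hB⟩
    · have hne : ¬ (p.2 = p.1) := by
        intro h; rw [h] at hlt; exact lt_irrefl _ hlt
      rw [if_neg hne]
      simp only [Finset.mem_coe, Finset.mem_filter, List.mem_toFinset]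
      exact ⟨h1, hB⟩
  · intro a ha
    beta_reduce
    simp only [Finset.mem_coe, Finset.mem_filter, List.mem_toFinset] at ha
    have haz : a ≠ z := before_ne ha.2
    split_ifs with h h2 h3
    · rfl
    · simp at h2
    · exact absurd h3.symm haz
    · rfl
  · intro p hp
    beta_reduce
    simp only [Finset.mem_coe, Finset.mem_filter, Finset.mem_product, List.mem_toFinset] at hp
    obtain ⟨⟨⟨h1, h2⟩, hlt⟩, hacc⟩ := hp
    rcases hacc with ⟨rfl, hB⟩ | ⟨rfl, hB⟩
    · rw [if_pos rfl, if_pos hlt]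
    · have hne : ¬ (p.2 = p.1) := by
        intro h; rw [h] at hlt; exact lt_irrefl _ hlt
      rw [if_neg hne, if_neg (by omega)]

end LU

namespace LU
variable {I : Type} [DecidableEq I]

lemma totalCost_eq_sum (L0 : List I) (hnd : L0.Nodup) (huniv : ∀ x : I, x ∈ L0)
    (S : List I → List I) (hperm : ∀ τ, (S τ).Perm L0) :
    ∀ (σ pref : List I), totalCostAux S pref σ
      = ∑ p ∈ (L0.toFinset ×ˢ L0.toFinset).filter
          (fun p => L0.idxOf p.1 < L0.idxOf p.2),
        pairCostAux S p.1 p.2 pref σ := by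
  intro σ
  induction σ with
  | nil => intro pref; simp [totalCostAux, pairCostAux]
  | cons z rest ih =>
    intro pref
    show numInv (S pref) (S (pref ++ [z])) + (S (pref ++ [z])).idxOf z
        + totalCostAux S (pref ++ [z]) rest = _
    rw [numInv_eq_sum L0 hnd _ _ (hperm pref) (hperm (pref ++ [z])),
      idxOf_eq_sum L0 hnd _ (hperm (pref ++ [z])) z (huniv z), ih (pref ++ [z])]
    rw [← Finset.sum_add_distrib, ← Finset.sum_add_distrib]
    apply Finset.sum_congr rfl
    intro p _
    rfl

lemma pairCostAux_proj (S : List I → List I) (hproj : Projective S) (x y : I) :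
    ∀ (σ pref : List I), pairCostAux S x y pref σ
      = pairCostAux S x y (proj2 x y pref) (proj2 x y σ) := by
  intro σ
  induction σ with
  | nil => intro pref; rfl
  | cons z rest ih =>
    intro pref
    have hxy' : ∀ τ : List I, Before y x (S τ) ↔ Before y x (S (proj2 x y τ)) := by
      intro τ
      rw [hproj y x τ, proj2_comm y x]
    have happ : proj2 x y (pref ++ [z]) = proj2 x y pref ++ proj2 x y [z] :=
      proj2_append x y pref [z]
    by_cases hz : z = x ∨ z = y
    · have h1 : proj2 x y [z] = [z] := proj2_cons_pair hz []
      rw [proj2_cons_pair hz rest]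
      show _ = (if (Before x y (S (proj2 x y pref)) ∧ Before y x (S (proj2 x y pref ++ [z]))) ∨
          (Before y x (S (proj2 x y pref)) ∧ Before x y (S (proj2 x y pref ++ [z]))) then 1 else 0)
        + (if (z = x ∧ Before y x (S (proj2 x y pref ++ [z]))) ∨
             (z = y ∧ Before x y (S (proj2 x y pref ++ [z]))) then 1 else 0)
        + pairCostAux S x y (proj2 x y pref ++ [z]) (proj2 x y rest)
      have hA : proj2 x y pref ++ [z] = proj2 x y (pref ++ [z]) := by rw [happ, h1]
      rw [hA]
      show (if (Before x y (S pref) ∧ Before y x (S (pref ++ [z]))) ∨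
          (Before y x (S pref) ∧ Before x y (S (pref ++ [z]))) then 1 else 0)
        + (if (z = x ∧ Before y x (S (pref ++ [z]))) ∨
             (z = y ∧ Before x y (S (pref ++ [z]))) then 1 else 0)
        + pairCostAux S x y (pref ++ [z]) rest = _
      rw [ih (pref ++ [z])]
      congr 1
      congr 1
      · apply if_congr _ rfl rfl
        exact or_congr (and_congr (hproj x y pref) (hxy' (pref ++ [z])))
          (and_congr (hxy' pref) (hproj x y (pref ++ [z])))
      · apply if_congr _ rfl rfl
        exact or_congr (and_congr Iff.rfl (hxy' (pref ++ [z])))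
          (and_congr Iff.rfl (hproj x y (pref ++ [z])))
    · have h1 : proj2 x y [z] = [] := by
        simp [proj2, List.filter_cons]
        tauto
      have hA : proj2 x y (pref ++ [z]) = proj2 x y pref := by rw [happ, h1, List.append_nil]
      rw [proj2_cons_not hz rest]
      show (if (Before x y (S pref) ∧ Before y x (S (pref ++ [z]))) ∨
          (Before y x (S pref) ∧ Before x y (S (pref ++ [z]))) then 1 else 0)
        + (if (z = x ∧ Before y x (S (pref ++ [z]))) ∨
             (z = y ∧ Before x y (S (pref ++ [z]))) then 1 else 0)
        + pairCostAux S x y (pref ++ [z]) rest = _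
      have e1 : Before x y (S (pref ++ [z])) ↔ Before x y (S pref) := by
        rw [hproj x y (pref ++ [z]), hA, ← hproj x y pref]
      have e2 : Before y x (S (pref ++ [z])) ↔ Before y x (S pref) := by
        rw [hxy' (pref ++ [z]), hA, ← hxy' pref]
      have i1 : (if (Before x y (S pref) ∧ Before y x (S (pref ++ [z]))) ∨
          (Before y x (S pref) ∧ Before x y (S (pref ++ [z]))) then 1 else 0) = 0 := by
        rw [if_neg]
        rintro (⟨u, v⟩ | ⟨u, v⟩)
        · exact before_asymm u (e2.1 v)
        · exact before_asymm (e1.1 v) u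
      have i2 : (if (z = x ∧ Before y x (S (pref ++ [z]))) ∨
             (z = y ∧ Before x y (S (pref ++ [z]))) then 1 else 0) = 0 := by
        rw [if_neg]
        rintro (⟨u, _⟩ | ⟨u, _⟩) <;> exact hz (by tauto)
      rw [i1, i2, ih (pref ++ [z]), hA]
      omega

end LU

namespace LU
variable {I : Type} [DecidableEq I]

def flipC (P Q : Prop) [Decidable P] [Decidable Q] : ℕ := if P ↔ Q then 0 else 1

lemma flipC_triangle (P Q R : Prop) [Decidable P] [Decidable Q] [Decidable R] :
    flipC P R ≤ flipC P Q + flipC Q R := by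
  unfold flipC
  by_cases hp : P <;> by_cases hq : Q <;> by_cases hr : R <;> simp [hp, hq, hr]

lemma flipC_self (P : Prop) [Decidable P] : flipC P P = 0 := if_pos Iff.rfl

lemma numInv_self (L : List I) : numInv L L = 0 := by
  unfold numInv
  rw [List.length_eq_zero_iff]
  apply List.filter_eq_nil_iff.2
  intro p _
  simp only [decide_eq_true_eq]
  omega

lemma idxOf_pair_left {x y : I} (hxy : x ≠ y) : ([x, y] : List I).idxOf x = 0 :=
  List.idxOf_cons_self

lemma idxOf_pair_right {x y : I} (hxy : x ≠ y) : ([x, y] : List I).idxOf y = 1 := by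
  rw [List.idxOf_cons_ne _ hxy, List.idxOf_cons_self]

lemma numInv_swap {x y : I} (hxy : x ≠ y) : numInv [x, y] [y, x] = 1 := by
  have h1 := idxOf_pair_left hxy
  have h2 := idxOf_pair_right hxy
  have h3 := idxOf_pair_left hxy.symm
  have h4 := idxOf_pair_right hxy.symm
  unfold numInv
  rw [show ([x, y] : List I).product [x, y] = [(x, x), (x, y), (y, x), (y, y)] by
    simp [List.product]]
  rw [List.filter_cons, List.filter_cons, List.filter_cons, List.filter_cons]
  simp only [h1, h2, h3, h4]
  norm_num

def pairL (x y : I) (L : List I) : List I := if Before x y L then [x, y] else [y, x]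

lemma pairL_perm (x y : I) (A B : List I) : (pairL x y A).Perm (pairL x y B) := by
  unfold pairL
  split_ifs <;> first
    | exact List.Perm.refl _
    | exact List.Perm.swap _ _ _
    | exact (List.Perm.swap _ _ _).symm

lemma numInv_pairL {x y : I} (hxy : x ≠ y) (A B : List I) :
    numInv (pairL x y A) (pairL x y B) = flipC (Before x y A) (Before x y B) := by
  unfold pairL flipC
  by_cases h1 : Before x y A <;> by_cases h2 : Before x y B <;>
    simp [h1, h2, numInv_self, numInv_swap hxy, numInv_swap hxy.symm]

lemma idx_pairL {x y z : I} (hxy : x ≠ y) (hz : z = x ∨ z = y) {B : List I}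
    (hx : x ∈ B) (hy : y ∈ B) :
    (pairL x y B).idxOf z
      = if (z = x ∧ Before y x B) ∨ (z = y ∧ Before x y B) then 1 else 0 := by
  have tri := before_or hx hy hxy
  rcases hz with h | h
  · subst h
    by_cases hB : Before z y B
    · have hnB : ¬ Before y z B := fun hh => before_asymm hB hh
      rw [if_neg (by tauto), pairL, if_pos hB]
      exact idxOf_pair_left hxy
    · have hyx : Before y z B := tri.resolve_left hB
      rw [if_pos (by tauto), pairL, if_neg hB]
      exact idxOf_pair_right hxy.symm
  · subst h
    by_cases hB : Before x z B
    · rw [if_pos (by tauto), pairL, if_pos hB]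
      exact idxOf_pair_right hxy
    · have hyx : Before z x B := tri.resolve_left hB
      have hne : ¬ (z = x) := hxy.symm
      rw [if_neg (by tauto), pairL, if_neg hB]
      exact idxOf_pair_left hxy.symm

lemma exch_eq_flip {x y : I} (hxy : x ≠ y) {L M : List I}
    (hxL : x ∈ L) (hyL : y ∈ L) (hxM : x ∈ M) (hyM : y ∈ M) :
    (if (Before x y L ∧ Before y x M) ∨ (Before y x L ∧ Before x y M) then 1 else 0)
      = flipC (Before x y L) (Before x y M) := by
  have triL := before_or hxL hyL hxy
  have triM := before_or hxM hyM hxy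
  unfold flipC
  by_cases hL : Before x y L <;> by_cases hM : Before x y M
  · have h1 : ¬ Before y x M := fun h => before_asymm hM h
    have h2 : ¬ Before y x L := fun h => before_asymm hL h
    rw [if_neg (by tauto), if_pos (by tauto)]
  · have h1 : Before y x M := triM.resolve_left hM
    rw [if_pos (by tauto), if_neg (by tauto)]
  · have h1 : Before y x L := triL.resolve_left hL
    rw [if_pos (by tauto), if_neg (by tauto)]
  · have h1 : Before y x L := triL.resolve_left hL
    have h2 : ¬ Before x y M := hM
    rw [if_neg (by tauto), if_pos (by tauto)]

def grab (x y : I) : List I → ℕ → List I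
  | _, 0 => []
  | [], _ + 1 => []
  | z :: rest, n + 1 =>
    if z = x ∨ z = y then z :: grab x y rest n else z :: grab x y rest (n + 1)

lemma grab_zero (x y : I) (l : List I) : grab x y l 0 = [] := by
  cases l <;> rfl

lemma grab_key {x y z : I} (hz : z = x ∨ z = y) :
    ∀ (p rest : List I),
      grab x y (p ++ z :: rest) ((proj2 x y p).length + 1) = p ++ [z] := by
  intro p
  induction p with
  | nil =>
    intro rest
    show grab x y (z :: rest) (0 + 1) = [z]
    rw [grab, if_pos hz, grab_zero]
  | cons w p' ihp =>
    intro rest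
    by_cases hw : w = x ∨ w = y
    · rw [proj2_cons_pair hw, List.length_cons]
      show grab x y (w :: (p' ++ z :: rest)) ((proj2 x y p').length + 1 + 1) = w :: (p' ++ [z])
      rw [grab, if_pos hw, ihp rest]
    · rw [proj2_cons_not hw]
      show grab x y (w :: (p' ++ z :: rest)) ((proj2 x y p').length + 1) = w :: (p' ++ [z])
      rw [grab, if_neg hw, ihp rest]

end LU

namespace LU
variable {I : Type} [DecidableEq I]

lemma proj2_eq_pairL {x y : I} {L0 : List I} (hnd : L0.Nodup) (hx : x ∈ L0) (hy : y ∈ L0)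
    (hxy : x ≠ y) : proj2 x y L0 = pairL x y L0 := by
  by_cases h : Before x y L0
  · rw [pairL, if_pos h]; exact proj2_pair hnd hx hy h
  · have h2 : Before y x L0 := (before_or hx hy hxy).resolve_left h
    rw [pairL, if_neg h, proj2_comm]
    exact proj2_pair hnd hy hx h2

lemma opt_pair_le (L0 : List I) (hnd : L0.Nodup) {x y : I} (hx : x ∈ L0) (hy : y ∈ L0)
    (hxy : x ≠ y) (T : List I → List I) (hT0 : T [] = L0) (hTp : ∀ τ, (T τ).Perm L0)
    (σ : List I) : optCost (proj2 x y L0) (proj2 x y σ) ≤ pairCost T x y σ := by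
  classical
  set S' : List I → List I := fun τ => pairL x y (T (grab x y σ τ.length)) with hS'def
  have memT : ∀ τ, x ∈ T τ ∧ y ∈ T τ := fun τ => ⟨(hTp τ).mem_iff.2 hx, (hTp τ).mem_iff.2 hy⟩
  have hmain : ∀ (rest p : List I), σ = p ++ rest →
      totalCostAux S' (proj2 x y p) (proj2 x y rest) ≤ pairCostAux T x y p rest +
        flipC (Before x y (T (grab x y σ (proj2 x y p).length))) (Before x y (T p)) := by
    intro rest
    induction rest with
    | nil => intro p _; exact Nat.zero_le _
    | cons z rest' ih =>
      intro p hσ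
      have hσ' : σ = (p ++ [z]) ++ rest' := by rw [hσ, List.append_assoc]; rfl
      by_cases hz : z = x ∨ z = y
      · have hg : grab x y σ ((proj2 x y p).length + 1) = p ++ [z] := by
          rw [hσ]; exact grab_key hz p rest'
        have hproj' : proj2 x y (p ++ [z]) = proj2 x y p ++ [z] := by
          rw [proj2_append, proj2_cons_pair hz]; rfl
        rw [proj2_cons_pair hz rest']
        have hunfoldL : totalCostAux S' (proj2 x y p) (z :: proj2 x y rest')
            = numInv (S' (proj2 x y p)) (S' (proj2 x y p ++ [z]))
              + (S' (proj2 x y p ++ [z])).idxOf z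
              + totalCostAux S' (proj2 x y p ++ [z]) (proj2 x y rest') := rfl
        have hunfoldR : pairCostAux T x y p (z :: rest')
            = (if (Before x y (T p) ∧ Before y x (T (p ++ [z]))) ∨
                (Before y x (T p) ∧ Before x y (T (p ++ [z]))) then 1 else 0)
              + (if (z = x ∧ Before y x (T (p ++ [z]))) ∨
                   (z = y ∧ Before x y (T (p ++ [z]))) then 1 else 0)
              + pairCostAux T x y (p ++ [z]) rest' := rfl
        rw [hunfoldL, hunfoldR]
        have hS1 : S' (proj2 x y p ++ [z]) = pairL x y (T (p ++ [z])) := by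
          show pairL x y (T (grab x y σ (proj2 x y p ++ [z]).length)) = _
          rw [List.length_append, List.length_singleton, hg]
        have hS0 : S' (proj2 x y p)
            = pairL x y (T (grab x y σ (proj2 x y p).length)) := rfl
        rw [hS0, hS1, numInv_pairL hxy,
          idx_pairL hxy hz (memT (p ++ [z])).1 (memT (p ++ [z])).2]
        have htail := ih (p ++ [z]) hσ'
        rw [hproj', List.length_append, List.length_singleton, hg, flipC_self] at htail
        rw [exch_eq_flip hxy (memT p).1 (memT p).2 (memT (p ++ [z])).1 (memT (p ++ [z])).2]
        have htri := flipC_triangle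
          (Before x y (T (grab x y σ (proj2 x y p).length)))
          (Before x y (T p)) (Before x y (T (p ++ [z])))
        omega
      · have hproj' : proj2 x y (p ++ [z]) = proj2 x y p := by
          rw [proj2_append, proj2_cons_not hz, proj2_nil, List.append_nil]
        rw [proj2_cons_not hz rest']
        have hunfoldR : pairCostAux T x y p (z :: rest')
            = (if (Before x y (T p) ∧ Before y x (T (p ++ [z]))) ∨
                (Before y x (T p) ∧ Before x y (T (p ++ [z]))) then 1 else 0)
              + (if (z = x ∧ Before y x (T (p ++ [z]))) ∨
                   (z = y ∧ Before x y (T (p ++ [z]))) then 1 else 0)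
              + pairCostAux T x y (p ++ [z]) rest' := rfl
        rw [hunfoldR]
        have htail := ih (p ++ [z]) hσ'
        rw [hproj'] at htail
        rw [exch_eq_flip hxy (memT p).1 (memT p).2 (memT (p ++ [z])).1 (memT (p ++ [z])).2]
        have htri := flipC_triangle
          (Before x y (T (grab x y σ (proj2 x y p).length)))
          (Before x y (T p)) (Before x y (T (p ++ [z])))
        omega
  have hm := hmain σ [] (List.nil_append σ).symm
  rw [show grab x y σ (proj2 x y ([] : List I)).length = [] from grab_zero x y σ,
    flipC_self] at hm
  rw [proj2_nil] at hm
  have hS'0 : S' [] = proj2 x y L0 := by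
    show pairL x y (T (grab x y σ ([] : List I).length)) = _
    rw [show ([] : List I).length = 0 from rfl, grab_zero, hT0]
    exact (proj2_eq_pairL hnd hx hy hxy).symm
  have hS'p : ∀ τ, (S' τ).Perm (proj2 x y L0) := by
    intro τ
    rw [← hS'0]
    exact pairL_perm x y _ _
  have hmem : totalCost S' (proj2 x y σ) ∈ {c | ∃ S0 : List I → List I,
      S0 [] = proj2 x y L0 ∧ (∀ τ, (S0 τ).Perm (proj2 x y L0)) ∧
      totalCost S0 (proj2 x y σ) = c} := ⟨S', hS'0, hS'p, rfl⟩
  refine le_trans (Nat.sInf_le hmem) ?_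
  have h1 : totalCost S' (proj2 x y σ) = totalCostAux S' [] (proj2 x y σ) := rfl
  have h2 : pairCost T x y σ = pairCostAux T x y [] σ := rfl
  omega

end LU

namespace LU
variable {I : Type} [DecidableEq I]

lemma one_le_pairCost (S : List I → List I) (L0 : List I) (hinit : S [] = L0)
    (hperm : ∀ σ, (S σ).Perm L0) {x y : I} (hx : x ∈ L0) (hy : y ∈ L0) (hxy : x ≠ y) :
    ∃ b, (b = x ∨ b = y) ∧ 1 ≤ pairCost S x y [b] := by
  have hmem : ∀ τ, x ∈ S τ ∧ y ∈ S τ :=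
    fun τ => ⟨(hperm τ).mem_iff.2 hx, (hperm τ).mem_iff.2 hy⟩
  have hx0 : x ∈ S [] := (hmem []).1
  have hy0 : y ∈ S [] := (hmem []).2
  by_cases hA : Before x y (S [])
  · refine ⟨y, Or.inr rfl, ?_⟩
    have tri := before_or (hmem ([] ++ [y])).1 (hmem ([] ++ [y])).2 hxy
    show 1 ≤ pairCostAux S x y [] [y]
    have hunfold : pairCostAux S x y [] [y]
        = (if (Before x y (S []) ∧ Before y x (S ([] ++ [y]))) ∨
            (Before y x (S []) ∧ Before x y (S ([] ++ [y]))) then 1 else 0)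
          + (if (y = x ∧ Before y x (S ([] ++ [y]))) ∨
               (y = y ∧ Before x y (S ([] ++ [y]))) then 1 else 0)
          + pairCostAux S x y ([] ++ [y]) [] := rfl
    rw [hunfold]
    rcases tri with hB | hB
    · have h1 : (if (y = x ∧ Before y x (S ([] ++ [y]))) ∨
          (y = y ∧ Before x y (S ([] ++ [y]))) then 1 else 0) = 1 :=
        if_pos (Or.inr ⟨rfl, hB⟩)
      omega
    · have h1 : (if (Before x y (S []) ∧ Before y x (S ([] ++ [y]))) ∨
          (Before y x (S []) ∧ Before x y (S ([] ++ [y]))) then 1 else 0) = 1 :=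
        if_pos (Or.inl ⟨hA, hB⟩)
      omega
  · have hA' : Before y x (S []) := (before_or hx0 hy0 hxy).resolve_left hA
    refine ⟨x, Or.inl rfl, ?_⟩
    have tri := before_or (hmem ([] ++ [x])).1 (hmem ([] ++ [x])).2 hxy
    show 1 ≤ pairCostAux S x y [] [x]
    have hunfold : pairCostAux S x y [] [x]
        = (if (Before x y (S []) ∧ Before y x (S ([] ++ [x]))) ∨
            (Before y x (S []) ∧ Before x y (S ([] ++ [x]))) then 1 else 0)
          + (if (x = x ∧ Before y x (S ([] ++ [x]))) ∨
               (x = y ∧ Before x y (S ([] ++ [x]))) then 1 else 0)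
          + pairCostAux S x y ([] ++ [x]) [] := rfl
    rw [hunfold]
    rcases tri with hB | hB
    · have h1 : (if (Before x y (S []) ∧ Before y x (S ([] ++ [x]))) ∨
          (Before y x (S []) ∧ Before x y (S ([] ++ [x]))) then 1 else 0) = 1 :=
        if_pos (Or.inr ⟨hA', hB⟩)
      omega
    · have h1 : (if (x = x ∧ Before y x (S ([] ++ [x]))) ∨
          (x = y ∧ Before x y (S ([] ++ [x]))) then 1 else 0) = 1 :=
        if_pos (Or.inl ⟨rfl, hB⟩)
      omega

end LU


/-- If a projective deterministic list update algorithm is strictly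
`c`-competitive on lists with two items, then it is strictly `c`-competitive on lists
of arbitrary length (partial cost model). -/
theorem projective_strictly_competitive_of_two_items
    {I : Type} [DecidableEq I]
    (S : List I → List I) (L0 : List I)
    (hnodup : L0.Nodup) (huniv : ∀ x : I, x ∈ L0)
    (hinit : S [] = L0) (hperm : ∀ σ, (S σ).Perm L0)
    (hproj : Projective S) (c : ℝ)
    (h2 : ∀ x y : I, x ≠ y → ∀ τ : List I, (∀ z ∈ τ, z = x ∨ z = y) →
      (pairCost S x y τ : ℝ) ≤ c * (optCost (proj2 x y L0) τ : ℝ)) :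
    ∀ σ : List I, (totalCost S σ : ℝ) ≤ c * (optCost L0 σ : ℝ) := by
  intro σ
  classical
  have hne : {cc | ∃ T : List I → List I, T [] = L0 ∧ (∀ τ, (T τ).Perm L0) ∧
      totalCost T σ = cc}.Nonempty :=
    ⟨totalCost (fun _ => L0) σ, fun _ => L0, rfl, fun _ => List.Perm.refl _, rfl⟩
  obtain ⟨T, hT0, hTp, hTc⟩ := Nat.sInf_mem hne
  have hTc' : totalCost T σ = optCost L0 σ := hTc
  have hdecompT : totalCost T σ = ∑ p ∈ (L0.toFinset ×ˢ L0.toFinset).filter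
      (fun p => L0.idxOf p.1 < L0.idxOf p.2), pairCostAux T p.1 p.2 [] σ :=
    LU.totalCost_eq_sum L0 hnodup huniv T hTp σ []
  have hdecompS : totalCost S σ = ∑ p ∈ (L0.toFinset ×ˢ L0.toFinset).filter
      (fun p => L0.idxOf p.1 < L0.idxOf p.2), pairCostAux S p.1 p.2 [] σ :=
    LU.totalCost_eq_sum L0 hnodup huniv S hperm σ []
  have hmemP : ∀ p ∈ (L0.toFinset ×ˢ L0.toFinset).filter
      (fun p => L0.idxOf p.1 < L0.idxOf p.2), p.1 ∈ L0 ∧ p.2 ∈ L0 ∧ p.1 ≠ p.2 := by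
    intro p hp
    simp only [Finset.mem_filter, Finset.mem_product, List.mem_toFinset] at hp
    refine ⟨hp.1.1, hp.1.2, fun h => ?_⟩
    rw [h] at hp
    exact lt_irrefl _ hp.2
  have hsumopt : ∑ p ∈ (L0.toFinset ×ˢ L0.toFinset).filter
      (fun p => L0.idxOf p.1 < L0.idxOf p.2),
      optCost (proj2 p.1 p.2 L0) (proj2 p.1 p.2 σ) ≤ optCost L0 σ := by
    rw [← hTc', hdecompT]
    apply Finset.sum_le_sum
    intro p hp
    obtain ⟨hq1, hq2, hq3⟩ := hmemP p hp
    exact LU.opt_pair_le L0 hnodup hq1 hq2 hq3 T hT0 hTp σ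
  have hprojS : ∀ (x y : I), pairCostAux S x y [] σ = pairCost S x y (proj2 x y σ) := by
    intro x y
    rw [LU.pairCostAux_proj S hproj x y σ []]
    rfl
  by_cases hPe : (L0.toFinset ×ˢ L0.toFinset).filter
      (fun p => L0.idxOf p.1 < L0.idxOf p.2) = ∅
  · have h0 : totalCost S σ = 0 := by rw [hdecompS, hPe]; simp
    have hopt0 : optCost L0 σ = 0 := by rw [← hTc', hdecompT, hPe]; simp
    rw [h0, hopt0]
    simp
  · obtain ⟨q, hq⟩ := Finset.nonempty_iff_ne_empty.2 hPe
    obtain ⟨hq1, hq2, hq3⟩ := hmemP q hq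
    have hc0 : 0 ≤ c := by
      obtain ⟨b, hb, hpc⟩ := LU.one_le_pairCost S L0 hinit hperm hq1 hq2 hq3
      have hball : ∀ z ∈ [b], z = q.1 ∨ z = q.2 := by
        intro z hz
        rw [List.mem_singleton] at hz
        subst hz
        exact hb
      have hh := h2 q.1 q.2 hq3 [b] hball
      have h1 : (1 : ℝ) ≤ c * (optCost (proj2 q.1 q.2 L0) [b] : ℝ) :=
        le_trans (by exact_mod_cast hpc) hh
      by_contra hc
      push_neg at hc
      nlinarith [Nat.cast_nonneg (α := ℝ) (optCost (proj2 q.1 q.2 L0) [b])]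
    have step1 : (totalCost S σ : ℝ) = ∑ p ∈ (L0.toFinset ×ˢ L0.toFinset).filter
        (fun p => L0.idxOf p.1 < L0.idxOf p.2),
        (pairCost S p.1 p.2 (proj2 p.1 p.2 σ) : ℝ) := by
      rw [hdecompS]
      push_cast
      apply Finset.sum_congr rfl
      intro p _
      rw [hprojS p.1 p.2]
    rw [step1]
    have step2 : ∑ p ∈ (L0.toFinset ×ˢ L0.toFinset).filter
        (fun p => L0.idxOf p.1 < L0.idxOf p.2),
        (pairCost S p.1 p.2 (proj2 p.1 p.2 σ) : ℝ)
        ≤ ∑ p ∈ (L0.toFinset ×ˢ L0.toFinset).filter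
        (fun p => L0.idxOf p.1 < L0.idxOf p.2),
        c * (optCost (proj2 p.1 p.2 L0) (proj2 p.1 p.2 σ) : ℝ) :=
      Finset.sum_le_sum (fun p hp => h2 p.1 p.2 (hmemP p hp).2.2 _
        (fun z hz => LU.mem_proj2 hz))
    refine le_trans step2 ?_
    rw [← Finset.mul_sum]
    apply mul_le_mul_of_nonneg_left ?_ hc0
    exact_mod_cast hsumopt
end

section
/- For any list update algorithm A, the total cost of A on a request sequence σ equals the sum over all unordered pairs {x,y} of list items of the projected pairwise cost A_{xy}(σ). -/
lemma indexOf_eq_card_lt {I : Type} [DecidableEq I] [Fintype I]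
    (M : List I) (hnd : M.Nodup) (hall : ∀ x : I, x ∈ M) (z : I) :
    (Finset.univ.filter (fun w => M.idxOf w < M.idxOf z)).card = M.idxOf z := by
  have hz : M.idxOf z < M.length := List.idxOf_lt_length_iff.mpr (hall z)
  have := Finset.card_bij (t := Finset.range (M.idxOf z))
    (fun (w : I) (_ : w ∈ Finset.univ.filter (fun w => M.idxOf w < M.idxOf z)) => M.idxOf w)
    (fun a ha => by simp only [Finset.mem_filter] at ha; simpa using ha.2)
    (fun a ha b hb h => (List.idxOf_inj (hall a)).mp h)
    (fun i hi => by
      simp only [Finset.mem_range] at hi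
      have hi' : i < M.length := lt_trans hi hz
      refine ⟨M[i], ?_, ?_⟩
      · simp only [Finset.mem_filter]
        exact ⟨Finset.mem_univ _, by rw [List.Nodup.idxOf_getElem hnd]; exact hi⟩
      · exact List.Nodup.idxOf_getElem hnd i hi')
  rw [this, Finset.card_range]

lemma length_filter_eq {α : Type} [DecidableEq α] [Fintype α] (l : List α) (hnd : l.Nodup)
    (hall : ∀ a : α, a ∈ l) (p : α → Bool) :
    (l.filter p).length = (Finset.univ.filter (fun a => p a = true)).card := by
  have h1 : (l.filter p).Nodup := hnd.filter p
  rw [← List.toFinset_card_of_nodup h1, List.toFinset_filter]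
  congr 1
  ext a
  simp [List.mem_toFinset, hall a]

lemma sum_symm_pairs {I : Type} [Fintype I] [LinearOrder I] (g : I → I → ℕ)
    (hd : ∀ x, g x x = 0) :
    ∑ x : I, ∑ y : I, g x y = ∑ x : I, ∑ y : I, if x < y then g x y + g y x else 0 := by
  have key : ∀ x y : I, g x y = (if x < y then g x y else 0) + (if y < x then g x y else 0) := by
    intro x y
    rcases lt_trichotomy x y with h|h|h
    · simp [h, not_lt_of_gt h]
    · subst h; simp [hd]
    · simp [h, not_lt_of_gt h]
  calc ∑ x : I, ∑ y : I, g x y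
      = ∑ x : I, ∑ y : I, ((if x < y then g x y else 0) + (if y < x then g x y else 0)) := by
        exact Finset.sum_congr rfl fun x _ => Finset.sum_congr rfl fun y _ => key x y
    _ = (∑ x : I, ∑ y : I, if x < y then g x y else 0)
        + ∑ x : I, ∑ y : I, if y < x then g x y else 0 := by
        rw [← Finset.sum_add_distrib]
        exact Finset.sum_congr rfl fun x _ => Finset.sum_add_distrib
    _ = (∑ x : I, ∑ y : I, if x < y then g x y else 0)
        + ∑ x : I, ∑ y : I, if x < y then g y x else 0 := by
        congr 1
        rw [Finset.sum_comm]
    _ = ∑ x : I, ∑ y : I, if x < y then g x y + g y x else 0 := by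
        rw [← Finset.sum_add_distrib]
        refine Finset.sum_congr rfl fun x _ => ?_
        rw [← Finset.sum_add_distrib]
        refine Finset.sum_congr rfl fun y _ => ?_
        split_ifs <;> simp

lemma numInv_eq {I : Type} [DecidableEq I] [Fintype I] [LinearOrder I] (L M : List I)
    (hLnd : L.Nodup) (hLall : ∀ x : I, x ∈ L) :
    numInv L M = ∑ x : I, ∑ y : I, if x < y then
      (if (Before x y L ∧ Before y x M) ∨ (Before y x L ∧ Before x y M) then 1 else 0)
      else 0 := by
  have hnd : (L.product L).Nodup := hLnd.product hLnd
  have hall : ∀ a : I × I, a ∈ L.product L := fun a =>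
    List.mem_product.mpr ⟨hLall a.1, hLall a.2⟩
  rw [numInv, length_filter_eq _ hnd hall]
  have : (Finset.univ.filter (fun a : I × I =>
      (decide (L.idxOf a.1 < L.idxOf a.2 ∧ M.idxOf a.2 < M.idxOf a.1)) = true)).card
      = ∑ a : I × I, if L.idxOf a.1 < L.idxOf a.2 ∧ M.idxOf a.2 < M.idxOf a.1
          then 1 else 0 := by
    rw [Finset.sum_boole]
    congr 1
    ext a
    simp
  rw [this, Fintype.sum_prod_type]
  rw [sum_symm_pairs (fun x y => if L.idxOf x < L.idxOf y ∧ M.idxOf y < M.idxOf x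
      then 1 else 0) (fun x => by simp)]
  refine Finset.sum_congr rfl fun x _ => Finset.sum_congr rfl fun y _ => ?_
  by_cases h : x < y
  · simp only [if_pos h, Before]
    split_ifs <;> omega
  · simp [h]

lemma indexOf_eq_sum {I : Type} [DecidableEq I] [Fintype I] [LinearOrder I] (M : List I)
    (hnd : M.Nodup) (hall : ∀ x : I, x ∈ M) (z : I) :
    M.idxOf z = ∑ x : I, ∑ y : I, if x < y then
      (if (z = x ∧ Before y x M) ∨ (z = y ∧ Before x y M) then 1 else 0)
      else 0 := by
  have key : ∑ x : I, ∑ y : I, (if y = z ∧ Before x y M then 1 else 0)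
      = ∑ x : I, ∑ y : I, if x < y then
        (if (z = x ∧ Before y x M) ∨ (z = y ∧ Before x y M) then 1 else 0) else 0 := by
    rw [sum_symm_pairs (fun x y => if y = z ∧ Before x y M then 1 else 0)
      (fun x => by simp [Before])]
    refine Finset.sum_congr rfl fun x _ => Finset.sum_congr rfl fun y _ => ?_
    by_cases h : x < y
    · simp only [if_pos h]
      have hiff : ((z = x ∧ Before y x M) ∨ (z = y ∧ Before x y M)) ↔
          ((x = z ∧ Before y x M) ∨ (y = z ∧ Before x y M)) := by
        constructor <;> rintro (⟨h1, h2⟩ | ⟨h1, h2⟩) <;> [exact Or.inl ⟨h1.symm, h2⟩;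
          exact Or.inr ⟨h1.symm, h2⟩; exact Or.inl ⟨h1.symm, h2⟩; exact Or.inr ⟨h1.symm, h2⟩]
      rw [if_congr hiff rfl rfl]
      simp only [Before]
      split_ifs <;> first | rfl | omega | tauto
    · simp [h]
  rw [← key]
  have inner : ∀ x : I, (∑ y : I, if y = z ∧ Before x y M then 1 else 0)
      = if Before x z M then 1 else 0 := by
    intro x
    rw [Finset.sum_eq_single z]
    · simp
    · intro b _ hb; simp [hb]
    · intro h; exact absurd (Finset.mem_univ z) h
  calc M.idxOf z
      = (Finset.univ.filter (fun w => M.idxOf w < M.idxOf z)).card :=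
        (indexOf_eq_card_lt M hnd hall z).symm
    _ = ∑ x : I, if M.idxOf x < M.idxOf z then 1 else 0 := by
        rw [Finset.sum_boole, Nat.cast_id]
    _ = ∑ x : I, ∑ y : I, if y = z ∧ Before x y M then 1 else 0 := by
        exact Finset.sum_congr rfl fun x _ => (inner x).symm

lemma totalCostAux_eq_sum {I : Type} [DecidableEq I] [Fintype I] [LinearOrder I]
    (S : List I → List I) (L0 : List I)
    (hnodup : L0.Nodup) (huniv : ∀ x : I, x ∈ L0)
    (hperm : ∀ σ, (S σ).Perm L0) (σ : List I) :
    ∀ pref, totalCostAux S pref σ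
      = ∑ x : I, ∑ y : I, if x < y then pairCostAux S x y pref σ else 0 := by
  induction σ with
  | nil => intro pref; simp [totalCostAux, pairCostAux]
  | cons z rest ih =>
    intro pref
    have hnd : ∀ τ, (S τ).Nodup := fun τ => ((hperm τ).nodup_iff).mpr hnodup
    have hall : ∀ τ (x : I), x ∈ S τ := fun τ x => ((hperm τ).mem_iff).mpr (huniv x)
    rw [totalCostAux]
    have hsplit : ∀ x y : I,
        (if x < y then pairCostAux S x y pref (z :: rest) else 0)
        = (if x < y then
            ((if (Before x y (S pref) ∧ Before y x (S (pref ++ [z]))) ∨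
                (Before y x (S pref) ∧ Before x y (S (pref ++ [z]))) then 1 else 0)
            + (if (z = x ∧ Before y x (S (pref ++ [z]))) ∨
                 (z = y ∧ Before x y (S (pref ++ [z]))) then 1 else 0)) else 0)
          + (if x < y then pairCostAux S x y (pref ++ [z]) rest else 0) := by
      intro x y
      rw [pairCostAux]
      split_ifs <;> simp
    calc numInv (S pref) (S (pref ++ [z])) + (S (pref ++ [z])).idxOf z
          + totalCostAux S (pref ++ [z]) rest
        = (∑ x : I, ∑ y : I, if x < y then
            ((if (Before x y (S pref) ∧ Before y x (S (pref ++ [z]))) ∨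
                (Before y x (S pref) ∧ Before x y (S (pref ++ [z]))) then 1 else 0)
            + (if (z = x ∧ Before y x (S (pref ++ [z]))) ∨
                 (z = y ∧ Before x y (S (pref ++ [z]))) then 1 else 0)) else 0)
          + ∑ x : I, ∑ y : I, if x < y then pairCostAux S x y (pref ++ [z]) rest else 0 := by
          rw [ih]
          congr 1
          rw [numInv_eq (S pref) (S (pref ++ [z])) (hnd pref) (hall pref),
            indexOf_eq_sum (S (pref ++ [z])) (hnd _) (hall _) z,
            ← Finset.sum_add_distrib]
          refine Finset.sum_congr rfl fun x _ => ?_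
          rw [← Finset.sum_add_distrib]
          refine Finset.sum_congr rfl fun y _ => ?_
          split_ifs <;> simp
      _ = ∑ x : I, ∑ y : I, if x < y then pairCostAux S x y pref (z :: rest) else 0 := by
          rw [← Finset.sum_add_distrib]
          refine Finset.sum_congr rfl fun x _ => ?_
          rw [← Finset.sum_add_distrib]
          exact Finset.sum_congr rfl fun y _ => (hsplit x y).symm

/-- The total cost of any list update algorithm on `σ` equals the sum
over all unordered pairs `{x,y}` of items of the projected pairwise cost `A_{xy}(σ)`. -/
theorem totalCost_eq_sum_pairCost
    {I : Type} [DecidableEq I] [Fintype I] [LinearOrder I]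
    (S : List I → List I) (L0 : List I)
    (hnodup : L0.Nodup) (huniv : ∀ x : I, x ∈ L0)
    (hperm : ∀ σ, (S σ).Perm L0) (σ : List I) :
    totalCost S σ = ∑ x : I, ∑ y : I, if x < y then pairCost S x y σ else 0 :=
  totalCostAux_eq_sum S L0 hnodup huniv hperm σ []
end

section
/- The algorithm LMTF, which moves the requested item x in front of all items not requested since the previous request to x (doing nothing on a first request), is not projective: for the initial list [a,b,c] and σ = b a a c b c, the relative order of b and c in S^LMTF(σ) differs from their order in S^LMTF(σ_{bc}). -/
/-- The suffix of `σ` after the last occurrence of `z` (the items requested since the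
previous request to `z`). -/
def afterLast {I : Type} [DecidableEq I] (σ : List I) (z : I) : List I :=
  (σ.reverse.takeWhile (fun w => decide (w ≠ z))).reverse

/-- Insert `z` directly in front of the first element of `L` satisfying `p`
(at the end if there is none). -/
def insertBefore {I : Type} (p : I → Bool) (z : I) : List I → List I
  | [] => [z]
  | w :: rest => if p w then z :: w :: rest else w :: insertBefore p z rest

/-- One step of LMTF: on a request to `z`, if `z` was requested before (in `past`),
move `z` directly in front of the foremost item that has not been requested since the
previous request to `z`; otherwise leave the list unchanged. -/
def lmtfServe {I : Type} [DecidableEq I] (past L : List I) (z : I) : List I :=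
  if z ∈ past then
    insertBefore (fun w => decide (w ∉ afterLast past z)) z (L.erase z)
  else L

def lmtfAux {I : Type} [DecidableEq I] : List I → List I → List I → List I
  | L, _, [] => L
  | L, past, z :: rest => lmtfAux (lmtfServe past L z) (past ++ [z]) rest

/-- State of the LMTF list after serving `σ` from initial list `L0`. -/
def lmtfState {I : Type} [DecidableEq I] (L0 : List I) (σ : List I) : List I :=
  lmtfAux L0 [] σ

/-- LMTF is not projective: for initial list `[a,b,c]` and
`σ = b a a c b c`, the relative order of `b` and `c` in `S^LMTF(σ)` differs from that
in `S^LMTF(σ_{bc})`. -/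
theorem lmtf_not_projective :
    let a : Fin 3 := 0; let b : Fin 3 := 1; let c : Fin 3 := 2
    let σ : List (Fin 3) := [b, a, a, c, b, c]
    (¬ (Before b c (lmtfState [a, b, c] σ) ↔
        Before b c (lmtfState [a, b, c] (proj2 b c σ)))) ∧
      ¬ Projective (lmtfState [a, b, c]) := by
  intro a b c σ
  have h1 : ¬ (Before b c (lmtfState [a, b, c] σ) ↔
      Before b c (lmtfState [a, b, c] (proj2 b c σ))) := by decide
  exact ⟨h1, fun hP => h1 (hP b c σ)⟩
end

section
/- The move-to-front rule MTF is projective: for any initial list and any request sequence σ, the relative order of any two items x,y in the MTF list state after σ depends only on the initial order of x,y and on σ_{xy}; specifically, x is in front of y iff (y has never been requested and either x was requested or x was initially in front of y) or the last request to x is more recent than the last request to y. -/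
/-- Move-to-front: each request moves the requested item to the front. -/
def mtfState {I : Type} [DecidableEq I] (L0 : List I) (σ : List I) : List I :=
  σ.foldl (fun L z => z :: L.erase z) L0

section
variable {I : Type} [DecidableEq I]

lemma before_cons_other {x y a : I} (hax : a ≠ x) (hay : a ≠ y) (L : List I) :
    Before x y (a :: L) ↔ Before x y L := by
  simp [Before, List.idxOf_cons_ne _ hax, List.idxOf_cons_ne _ hay, Nat.succ_lt_succ_iff]

lemma before_cons_x {x y : I} (hxy : x ≠ y) (L : List I) :
    Before x y (x :: L) := by
  simp [Before, List.idxOf_cons_self, List.idxOf_cons_ne _ hxy]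

lemma not_before_cons_y {x y : I} (_hxy : x ≠ y) (L : List I) :
    ¬ Before x y (y :: L) := by
  simp [Before, List.idxOf_cons_self]

lemma before_erase {x y z : I} (hzx : z ≠ x) (hzy : z ≠ y) (hxy : x ≠ y) :
    ∀ L : List I, Before x y (L.erase z) ↔ Before x y L := by
  intro L
  induction L with
  | nil => simp
  | cons a t ih =>
    by_cases haz : a = z
    · subst haz
      rw [List.erase_cons_head]
      exact (before_cons_other hzx hzy t).symm
    · rw [List.erase_cons_tail (by simp [haz])]
      by_cases hax : a = x
      · subst hax
        exact iff_of_true (before_cons_x hxy _) (before_cons_x hxy _)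
      · by_cases hay : a = y
        · subst hay
          exact iff_of_false (not_before_cons_y hxy _) (not_before_cons_y hxy _)
        · rw [before_cons_other hax hay, before_cons_other hax hay, ih]
end

section
variable {I : Type} [DecidableEq I]

lemma mtf_perm (L0 : List I) : ∀ σ : List I, (∀ z ∈ σ, z ∈ L0) →
    (σ.foldl (fun L z => z :: L.erase z) L0).Perm L0 := by
  intro σ
  induction σ using List.reverseRecOn with
  | nil => simp
  | append_singleton σ z ih =>
    intro h
    rw [List.foldl_append]
    simp only [List.foldl_cons, List.foldl_nil]
    have hp := ih (fun w hw => h w (by simp [hw]))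
    have hz : z ∈ σ.foldl (fun L z => z :: L.erase z) L0 :=
      hp.mem_iff.2 (h z (by simp))
    exact (List.perm_cons_erase hz).symm.trans hp

lemma mtf_char (L0 : List I) (x y : I) (hx : x ∈ L0) (hy : y ∈ L0) (hxy : x ≠ y) :
    ∀ σ : List I, (∀ z ∈ σ, z ∈ L0) →
    (Before x y (σ.foldl (fun L z => z :: L.erase z) L0) ↔
      (y ∉ σ ∧ (x ∈ σ ∨ Before x y L0)) ∨
      (x ∈ σ ∧ y ∈ σ ∧ σ.reverse.idxOf x < σ.reverse.idxOf y)) := by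
  intro σ
  induction σ using List.reverseRecOn with
  | nil => simp
  | append_singleton σ z ih =>
    intro h
    have hσ : ∀ w ∈ σ, w ∈ L0 := fun w hw => h w (by simp [hw])
    have ih := ih hσ
    rw [List.foldl_append]
    simp only [List.foldl_cons, List.foldl_nil]
    have hperm := mtf_perm L0 σ hσ
    by_cases hzx : z = x
    · rw [hzx]
      have hL : Before x y (x :: (σ.foldl (fun L z => z :: L.erase z) L0).erase x) :=
        before_cons_x hxy _
      rw [iff_true_intro hL, true_iff]
      by_cases hyσ : y ∈ σ
      · right
        refine ⟨by simp, by simp [hyσ], ?_⟩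
        rw [List.reverse_append]
        simp only [List.reverse_singleton, List.singleton_append]
        rw [List.idxOf_cons_self, List.idxOf_cons_ne _ hxy]
        exact Nat.succ_pos _
      · left
        exact ⟨by simp [hyσ, Ne.symm hxy], Or.inl (by simp)⟩
    · by_cases hzy : z = y
      · rw [hzy]
        have hL := not_before_cons_y hxy ((σ.foldl (fun L z => z :: L.erase z) L0).erase y)
        rw [iff_false_intro hL, false_iff]
        rintro (⟨hny, -⟩ | ⟨-, -, hlt⟩)
        · exact hny (by simp)
        · rw [List.reverse_append] at hlt
          simp only [List.reverse_singleton, List.singleton_append] at hlt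
          rw [List.idxOf_cons_self, List.idxOf_cons_ne _ (Ne.symm hxy)] at hlt
          omega
      · rw [before_cons_other hzx hzy _]
        rw [before_erase hzx hzy hxy, ih]
        have hxz : x ≠ z := fun e => hzx e.symm
        have hyz : y ≠ z := fun e => hzy e.symm
        rw [List.reverse_append]
        simp only [List.reverse_singleton, List.singleton_append]
        rw [List.idxOf_cons_ne _ hzx, List.idxOf_cons_ne _ hzy]
        simp [hxz, hyz, Nat.succ_lt_succ_iff]

lemma filter_idxOf_lt (x y : I) (hxy : x ≠ y) :
    ∀ τ : List I, x ∈ τ → y ∈ τ →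
    ((τ.filter (fun z => decide (z = x ∨ z = y))).idxOf x <
      (τ.filter (fun z => decide (z = x ∨ z = y))).idxOf y ↔
     τ.idxOf x < τ.idxOf y) := by
  intro τ
  induction τ with
  | nil => simp
  | cons a t ih =>
    intro hxmem hymem
    by_cases hax : a = x
    · subst hax
      rw [List.filter_cons_of_pos (p := fun z => decide (z = a ∨ z = y)) (by simp)]
      constructor <;> intro _
      · exact before_cons_x hxy t
      · exact before_cons_x hxy _
    · by_cases hay : a = y
      · subst hay
        rw [List.filter_cons_of_pos (p := fun z => decide (z = x ∨ z = a)) (by simp)]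
        constructor <;> intro hlt
        · exact absurd hlt (not_before_cons_y hxy _)
        · exact absurd hlt (not_before_cons_y hxy t)
      · rw [List.filter_cons_of_neg (p := fun z => decide (z = x ∨ z = y)) (by simp [hax, hay])]
        have hxt : x ∈ t := by rcases List.mem_cons.1 hxmem with h | h; exact absurd h.symm hax; exact h
        have hyt : y ∈ t := by rcases List.mem_cons.1 hymem with h | h; exact absurd h.symm hay; exact h
        rw [ih hxt hyt]
        exact (before_cons_other hax hay t).symm

end

/-- MTF is projective, and `x` is in front of `y` iff (`y` was never
requested and either `x` was requested or `x` was initially in front of `y`) or the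
last request to `x` is more recent than the last request to `y`. -/
theorem mtf_projective
    {I : Type} [DecidableEq I] (L0 : List I) (hnodup : L0.Nodup)
    (x y : I) (hx : x ∈ L0) (hy : y ∈ L0) (hxy : x ≠ y)
    (σ : List I) (hσ : ∀ z ∈ σ, z ∈ L0) :
    (Before x y (mtfState L0 σ) ↔ Before x y (mtfState L0 (proj2 x y σ))) ∧
    (Before x y (mtfState L0 σ) ↔
      (y ∉ σ ∧ (x ∈ σ ∨ Before x y L0)) ∨
      (x ∈ σ ∧ y ∈ σ ∧ σ.reverse.idxOf x < σ.reverse.idxOf y)) := by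
  have hproj : ∀ z ∈ proj2 x y σ, z ∈ L0 := fun z hz => hσ z (List.mem_of_mem_filter hz)
  have h1 := mtf_char L0 x y hx hy hxy σ hσ
  have h2 := mtf_char L0 x y hx hy hxy (proj2 x y σ) hproj
  have hxmem : x ∈ proj2 x y σ ↔ x ∈ σ := by simp [proj2]
  have hymem : y ∈ proj2 x y σ ↔ y ∈ σ := by simp [proj2]
  have hrev : (proj2 x y σ).reverse = σ.reverse.filter (fun z => decide (z = x ∨ z = y)) := by
    rw [proj2, List.filter_reverse]
  have hrhs : ((y ∉ proj2 x y σ ∧ (x ∈ proj2 x y σ ∨ Before x y L0)) ∨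
      (x ∈ proj2 x y σ ∧ y ∈ proj2 x y σ ∧
        (proj2 x y σ).reverse.idxOf x < (proj2 x y σ).reverse.idxOf y)) ↔
      ((y ∉ σ ∧ (x ∈ σ ∨ Before x y L0)) ∨
      (x ∈ σ ∧ y ∈ σ ∧ σ.reverse.idxOf x < σ.reverse.idxOf y)) := by
    apply or_congr
    · exact and_congr (not_congr hymem) (or_congr hxmem Iff.rfl)
    · constructor
      · rintro ⟨hxs, hys, hlt⟩
        have hxs' := hxmem.1 hxs
        have hys' := hymem.1 hys
        refine ⟨hxs', hys', ?_⟩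
        rw [hrev] at hlt
        exact (filter_idxOf_lt x y hxy σ.reverse (by simp [hxs']) (by simp [hys'])).1 hlt
      · rintro ⟨hxs, hys, hlt⟩
        refine ⟨hxmem.2 hxs, hymem.2 hys, ?_⟩
        rw [hrev]
        exact (filter_idxOf_lt x y hxy σ.reverse (by simp [hxs]) (by simp [hys])).2 hlt
  constructor
  · exact h1.trans (hrhs.symm.trans h2.symm)
  · exact h1
end

section
/- If a pair of requests x_(q), y_(l) is an agile pair of a request sequence σ for a deterministic projective algorithm, then the items x and y are adjacent in the list state S(σ). -/
/-- The sequence `σ` with the requests at positions `p` and `p+1` transposed. -/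
def SwapAt {I : Type} (σ : List I) (p : ℕ) : List I :=
  σ.take p ++ ((σ.drop p).take 2).reverse ++ σ.drop (p + 2)

/-- The requests at positions `p`, `p+1` of `σ` are an agile pair of requests to `x`
and `y`: they are adjacent requests to `x` and `y` (in either order) and transposing
them changes the relative order of `x` and `y` in the resulting list state. -/
def AgilePairAt {I : Type} [DecidableEq I] (S : List I → List I)
    (σ : List I) (p : ℕ) (x y : I) : Prop :=
  ((σ[p]? = some x ∧ σ[p + 1]? = some y) ∨
   (σ[p]? = some y ∧ σ[p + 1]? = some x)) ∧
  ¬ (Before x y (S σ) ↔ Before x y (S (SwapAt σ p)))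

/-- `x` and `y` are adjacent in the list state `L`. -/
def AdjacentIn {I : Type} (x y : I) (L : List I) : Prop :=
  ∃ k, (L[k]? = some x ∧ L[k + 1]? = some y) ∨
       (L[k]? = some y ∧ L[k + 1]? = some x)

/-- `τ ∈ perm(x^i y^j)`: exactly `i` requests to `x`, `j` requests to `y`, nothing else. -/
def InPerm {I : Type} [DecidableEq I] (x y : I) (i j : ℕ) (τ : List I) : Prop :=
  τ.count x = i ∧ τ.count y = j ∧ ∀ z ∈ τ, z = x ∨ z = y

/-- The pair of unary projections `x^i`, `y^j` is agile: both relative orders of `x`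
and `y` are realized by sequences in `perm(x^i y^j)`. -/
def Agile {I : Type} [DecidableEq I] (S : List I → List I) (x : I) (i : ℕ)
    (y : I) (j : ℕ) : Prop :=
  ∃ τ τ' : List I, InPerm x y i j τ ∧ InPerm x y i j τ' ∧
    Before x y (S τ) ∧ Before y x (S τ')

/-- `x_(q) ∈ R(x^i)`: in some request sequence `σ` with `i` requests to `x`, the `q`-th
request to `x` forms an agile pair with some request to another item `y`. -/
def InR {I : Type} [DecidableEq I] (S : List I → List I) (x : I) (i q : ℕ) : Prop :=
  ∃ (σ : List I) (y : I) (p : ℕ), σ.count x = i ∧ y ≠ x ∧ AgilePairAt S σ p x y ∧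
    ((σ[p]? = some x ∧ (σ.take (p + 1)).count x = q) ∨
     (σ[p + 1]? = some x ∧ (σ.take (p + 2)).count x = q))

lemma get?_indexOf' {I : Type} [DecidableEq I] {a : I} {L : List I} (h : a ∈ L) :
    L[L.idxOf a]? = some a := by
  rw [List.getElem?_eq_getElem (List.idxOf_lt_length_iff.mpr h),
    List.getElem_idxOf]

lemma before_total' {I : Type} [DecidableEq I] {a b : I} {L : List I} (ha : a ∈ L) (hb : b ∈ L)
    (hab : a ≠ b) (h : ¬ Before a b L) : Before b a L := by
  have hne : L.idxOf a ≠ L.idxOf b := fun he => hab ((List.idxOf_inj ha).mp he)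
  have h' : ¬ (L.idxOf a < L.idxOf b) := h
  show L.idxOf b < L.idxOf a
  omega

lemma proj2_swapAt' {I : Type} [DecidableEq I] (σ : List I) (p : ℕ) (a b s t : I)
    (ha : σ[p]? = some a) (hb : σ[p + 1]? = some b)
    (hnot : ¬ ((a = s ∨ a = t) ∧ (b = s ∨ b = t))) :
    proj2 s t (SwapAt σ p) = proj2 s t σ := by
  obtain ⟨hp, ha'⟩ := List.getElem?_eq_some_iff.mp ha
  obtain ⟨hp1, hb'⟩ := List.getElem?_eq_some_iff.mp hb
  have hd : σ.drop p = a :: b :: σ.drop (p + 2) := by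
    rw [List.drop_eq_getElem_cons hp, List.drop_eq_getElem_cons hp1, ha', hb']
  have hσ : σ = σ.take p ++ a :: b :: σ.drop (p + 2) := by
    conv_lhs => rw [← List.take_append_drop p σ, hd]
  have hswap : SwapAt σ p = σ.take p ++ b :: a :: σ.drop (p + 2) := by
    unfold SwapAt
    rw [hd]
    simp
  unfold proj2
  conv_rhs => rw [hσ]
  rw [hswap, List.filter_append, List.filter_append]
  congr 1
  by_cases has : a = s ∨ a = t <;> by_cases hbs : b = s ∨ b = t
  · exact absurd ⟨has, hbs⟩ hnot
  · simp [List.filter_cons, has, hbs]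
  · simp [List.filter_cons, has, hbs]
  · simp [List.filter_cons, has, hbs]

lemma adj_of_flip' {I : Type} [DecidableEq I] (x y : I) (L L' : List I)
    (hxy : x ≠ y) (hnd : L.Nodup)
    (hxL : x ∈ L) (hyL : y ∈ L)
    (hsame : ∀ s t : I, ¬ ((x = s ∨ x = t) ∧ (y = s ∨ y = t)) →
      (Before s t L ↔ Before s t L'))
    (hB : Before x y L) (hB' : Before y x L') :
    L.idxOf y = L.idxOf x + 1 := by
  by_contra hne
  have hi : L.idxOf x < L.idxOf y := hB
  have hlt : L.idxOf x + 1 < L.idxOf y := by omega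
  have hjlen : L.idxOf y < L.length := List.idxOf_lt_length_iff.mpr hyL
  have hk : L.idxOf x + 1 < L.length := by omega
  set z := L[L.idxOf x + 1] with hz
  have hzidx : L.idxOf z = L.idxOf x + 1 := hnd.idxOf_getElem _ hk
  have hzx : z ≠ x := by intro h; rw [h] at hzidx; omega
  have hzy : z ≠ y := by intro h; rw [h] at hzidx; omega
  have h1 : Before x z L := by show L.idxOf x < L.idxOf z; omega
  have h2 : Before z y L := by show L.idxOf z < L.idxOf y; omega
  have h1' : Before x z L' := (hsame x z (by
    rintro ⟨-, hy2⟩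
    rcases hy2 with h | h
    · exact hxy h.symm
    · exact hzy h.symm)).mp h1
  have h2' : Before z y L' := (hsame z y (by
    rintro ⟨hx2, -⟩
    rcases hx2 with h | h
    · exact hzx h.symm
    · exact hxy h)).mp h2
  have hB'' : L'.idxOf y < L'.idxOf x := hB'
  have ha : L'.idxOf x < L'.idxOf z := h1'
  have hb : L'.idxOf z < L'.idxOf y := h2'
  omega

/-- For a deterministic projective algorithm, if `x_(q)`, `y_(l)` is an
agile pair of `σ`, then `x` and `y` are adjacent in the list state `S(σ)`. -/
theorem agilePair_adjacent
    {I : Type} [DecidableEq I] (S : List I → List I) (L0 : List I)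
    (hperm : ∀ σ, (S σ).Perm L0) (hnodup : L0.Nodup)
    (hproj : Projective S)
    (x y : I) (hxy : x ≠ y) (σ : List I) (p : ℕ)
    (hagile : AgilePairAt S σ p x y) :
    AdjacentIn x y (S σ) := by
  obtain ⟨hpos, hflip⟩ := hagile
  set L := S σ with hL
  set L' := S (SwapAt σ p) with hL'
  have hLL' : L.Perm L' := (hperm σ).trans (hperm _).symm
  have hndL : L.Nodup := (hperm σ).nodup_iff.mpr hnodup
  have hsame : ∀ s t : I, ¬ ((x = s ∨ x = t) ∧ (y = s ∨ y = t)) →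
      (Before s t L ↔ Before s t L') := by
    intro s t hst
    rw [hL, hL', hproj s t σ, hproj s t (SwapAt σ p)]
    rcases hpos with ⟨ha, hb⟩ | ⟨ha, hb⟩
    · rw [proj2_swapAt' σ p x y s t ha hb (by tauto)]
    · rw [proj2_swapAt' σ p y x s t ha hb (by tauto)]
  have hxL : x ∈ L := by
    by_contra hx
    have hx' : x ∉ L' := fun h => hx (hLL'.mem_iff.mpr h)
    have e1 : ¬ Before x y L := by
      have h1 : L.idxOf x = L.length := List.idxOf_eq_length hx
      show ¬ (L.idxOf x < L.idxOf y)
      have := List.idxOf_le_length (a := y) (l := L)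
      omega
    have e2 : ¬ Before x y L' := by
      have h1 : L'.idxOf x = L'.length := List.idxOf_eq_length hx'
      show ¬ (L'.idxOf x < L'.idxOf y)
      have := List.idxOf_le_length (a := y) (l := L')
      omega
    exact hflip ⟨fun h => absurd h e1, fun h => absurd h e2⟩
  have hyL : y ∈ L := by
    by_contra hy
    have hy' : y ∉ L' := fun h => hy (hLL'.mem_iff.mpr h)
    have e1 : Before x y L ↔ x ∈ L := by
      show L.idxOf x < L.idxOf y ↔ x ∈ L
      rw [List.idxOf_eq_length hy]
      exact List.idxOf_lt_length_iff
    have e2 : Before x y L' ↔ x ∈ L' := by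
      show L'.idxOf x < L'.idxOf y ↔ x ∈ L'
      rw [List.idxOf_eq_length hy']
      exact List.idxOf_lt_length_iff
    exact hflip (by rw [e1, e2, hLL'.mem_iff])
  have hxL' : x ∈ L' := hLL'.mem_iff.mp hxL
  have hyL' : y ∈ L' := hLL'.mem_iff.mp hyL
  by_cases hb : Before x y L
  · have hb1 : ¬ Before x y L' := fun h => hflip ⟨fun _ => h, fun _ => hb⟩
    have hb2 : Before y x L' := before_total' hxL' hyL' hxy hb1
    have hadj := adj_of_flip' x y L L' hxy hndL hxL hyL hsame hb hb2
    refine ⟨L.idxOf x, Or.inl ⟨get?_indexOf' hxL, ?_⟩⟩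
    rw [← hadj]
    exact get?_indexOf' hyL
  · have hb2 : Before y x L := before_total' hxL hyL hxy hb
    have hb1 : Before x y L' := by
      by_contra h
      exact hflip ⟨fun h' => absurd h' hb, fun h' => absurd h' h⟩
    have hsame' : ∀ s t : I, ¬ ((y = s ∨ y = t) ∧ (x = s ∨ x = t)) →
        (Before s t L ↔ Before s t L') := fun s t h => hsame s t (by tauto)
    have hadj := adj_of_flip' y x L L' hxy.symm hndL hyL hxL hsame' hb2 hb1
    refine ⟨L.idxOf y, Or.inr ⟨get?_indexOf' hyL, ?_⟩⟩
    rw [← hadj]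
    exact get?_indexOf' hxL
end

section
/- For a deterministic projective algorithm, if the pair of unary projections x^i, y^j is agile and the pair x^i, z^k is agile (with y ≠ z), then there is exactly one index q with 1 ≤ q ≤ i such that the q-th request to x participates in an agile pair, i.e., |R(x^i)| = 1. -/
namespace RUaux

open List

set_option linter.unusedSectionVars false

variable {I : Type} [DecidableEq I]

def Flip (S : List I → List I) (a b : I) (σ σ' : List I) : Prop :=
  ¬ (Before a b (S σ) ↔ Before a b (S σ'))

lemma flip_symm {S : List I → List I} {a b : I} {σ σ' : List I}
    (h : Flip S a b σ σ') : Flip S a b σ' σ := fun h' => h h'.symm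

lemma before_eq_of_proj {S : List I → List I} (hproj : Projective S)
    {a b : I} {σ τ : List I} (h : proj2 a b σ = τ) :
    (Before a b (S σ) ↔ Before a b (S τ)) := h ▸ hproj a b σ

lemma decomp {σ : List I} {p : ℕ} {c d : I} (hc : σ[p]? = some c)
    (hd : σ[p + 1]? = some d) :
    σ = σ.take p ++ c :: d :: σ.drop (p + 2) ∧
    SwapAt σ p = σ.take p ++ d :: c :: σ.drop (p + 2) := by
  obtain ⟨h1, e1⟩ := List.getElem?_eq_some_iff.1 hc
  obtain ⟨h2, e2⟩ := List.getElem?_eq_some_iff.1 hd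
  have hdrop : σ.drop p = c :: d :: σ.drop (p + 2) := by
    rw [drop_eq_getElem_cons h1, drop_eq_getElem_cons h2, e1, e2]
  constructor
  · conv_lhs => rw [← take_append_drop p σ]
    rw [hdrop]
  · rw [SwapAt, hdrop]
    simp

lemma swapAt_of_short {σ : List I} {p : ℕ} (h : σ.length ≤ p + 1) : SwapAt σ p = σ := by
  have h2 : (σ.drop p).length ≤ 1 := by simp; omega
  have h4 : ((σ.drop p).take 2).reverse = σ.drop p := by
    rw [take_of_length_le (by omega)]
    rcases hl : σ.drop p with _ | ⟨a, _ | ⟨b, l⟩⟩ <;> simp_all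
  have h5 : σ.drop (p + 2) = [] := by
    apply drop_eq_nil_of_le; omega
  rw [SwapAt, h4, h5, append_nil, take_append_drop]

lemma swapAt_same {σ : List I} {p : ℕ} {c : I} (h1 : σ[p]? = some c)
    (h2 : σ[p + 1]? = some c) : SwapAt σ p = σ := by
  obtain ⟨e1, e2⟩ := decomp h1 h2
  rw [e2, ← e1]

lemma swapAt_cons (a : I) (σ : List I) (p : ℕ) :
    SwapAt (a :: σ) (p + 1) = a :: SwapAt σ p := by
  have : p + 1 + 2 = (p + 2) + 1 := by omega
  rw [SwapAt, SwapAt, this, take_succ_cons, drop_succ_cons, drop_succ_cons]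
  simp

lemma swapAt_zero (a b : I) (l : List I) : SwapAt (a :: b :: l) 0 = b :: a :: l := by
  simp [SwapAt]

lemma swapAt_decomp (A B : List I) (c d : I) :
    SwapAt (A ++ c :: d :: B) A.length = A ++ d :: c :: B := by
  have h1 : (A ++ c :: d :: B)[A.length]? = some c := by
    rw [getElem?_append_right (le_refl _)]
    simp
  have h2 : (A ++ c :: d :: B)[A.length + 1]? = some d := by
    rw [getElem?_append_right (by omega)]
    simp
  obtain ⟨e1, e2⟩ := decomp h1 h2
  rw [e2]
  have ht : (A ++ c :: d :: B).take A.length = A := by simp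
  have hd : (A ++ c :: d :: B).drop (A.length + 2) = B := by
    rw [← drop_drop, drop_left]
    simp
  rw [ht, hd]


lemma find_flip {l l' : List I} (h : l.Perm l') (f : List I → Prop)
    (hf : ¬ (f l ↔ f l')) :
    ∃ ρ p, ρ.Perm l ∧ ¬ (f ρ ↔ f (SwapAt ρ p)) := by
  induction h generalizing f with
  | nil => exact absurd Iff.rfl hf
  | cons a h ih =>
    obtain ⟨ρ, p, hp, hflip⟩ := ih (fun t => f (a :: t)) hf
    exact ⟨a :: ρ, p + 1, hp.cons a, by rwa [swapAt_cons]⟩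
  | swap c d l =>
    exact ⟨d :: c :: l, 0, Perm.refl _, by rwa [swapAt_zero]⟩
  | trans h1 h2 ih1 ih2 =>
    rename_i l1 l2 l3
    by_cases hm : f l1 ↔ f l2
    · obtain ⟨ρ, p, hp, hflip⟩ := ih2 f (fun h' => hf (hm.trans h'))
      exact ⟨ρ, p, hp.trans h1.symm, hflip⟩
    · exact ih1 f hm

lemma perm_of_two_letter {x y : I} (hxy : x ≠ y) {s t : List I}
    (hs : ∀ c ∈ s, c = x ∨ c = y) (ht : ∀ c ∈ t, c = x ∨ c = y)
    (hcx : s.count x = t.count x) (hcy : s.count y = t.count y) : s.Perm t := by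
  rw [perm_iff_count]
  intro a
  by_cases hax : a = x
  · subst hax; exact hcx
  by_cases hay : a = y
  · subst hay; exact hcy
  rw [count_eq_zero.2 (fun hm => by rcases hs a hm with h | h <;> simp_all),
    count_eq_zero.2 (fun hm => by rcases ht a hm with h | h <;> simp_all)]

/-- partner-explicit witness -/
def WitP (S : List I → List I) (x u : I) (i q : ℕ) : Prop :=
  ∃ α β : List I, (α ++ x :: u :: β).count x = i ∧ q = α.count x + 1 ∧
    Flip S x u (α ++ x :: u :: β) (α ++ u :: x :: β)

lemma pair_witp {S : List I → List I} {x u : I} {σ : List I} {p q i : ℕ}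
    (hux : u ≠ x) (hcount : σ.count x = i) (hA : AgilePairAt S σ p x u)
    (hq : (σ[p]? = some x ∧ (σ.take (p + 1)).count x = q) ∨
      (σ[p + 1]? = some x ∧ (σ.take (p + 2)).count x = q)) :
    WitP S x u i q ∧ 1 ≤ q ∧ q ≤ i := by
  obtain ⟨hor, hflip⟩ := hA
  rcases hor with ⟨h1, h2⟩ | ⟨h1, h2⟩
  · -- σ = A ++ x :: u :: B
    obtain ⟨e1, e2⟩ := decomp h1 h2
    rcases hq with ⟨_, hq⟩ | ⟨hq', _⟩
    swap
    · rw [h2] at hq'; exact absurd (Option.some.inj hq') hux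
    have htake : σ.take (p + 1) = σ.take p ++ [x] := by
      rw [take_succ, h1]; rfl
    have hqeq : q = (σ.take p).count x + 1 := by
      rw [← hq, htake]; simp
    refine ⟨⟨σ.take p, σ.drop (p + 2), by rw [← e1]; exact hcount, hqeq, ?_⟩, ?_, ?_⟩
    · rw [← e1, ← e2]; exact hflip
    · omega
    · have : ((σ.take p) ++ x :: u :: (σ.drop (p+2))).count x = i := by
        rw [← e1]; exact hcount
      simp [count_append, count_cons, hux] at this
      omega
  · -- σ = A ++ u :: x :: B
    obtain ⟨e1, e2⟩ := decomp h1 h2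
    rcases hq with ⟨hq', _⟩ | ⟨_, hq⟩
    · rw [h1] at hq'; exact absurd (Option.some.inj hq') hux
    have htake1 : σ.take (p + 1) = σ.take p ++ [u] := by
      rw [take_succ, h1]; rfl
    have htake : σ.take (p + 2) = σ.take p ++ [u, x] := by
      rw [show p + 2 = (p + 1) + 1 by rfl, take_succ, h2, htake1]
      simp
    have hqeq : q = (σ.take p).count x + 1 := by
      rw [← hq, htake]
      simp [count_append, count_cons, hux]
    have e1' : σ.count x = ((σ.take p) ++ u :: x :: (σ.drop (p+2))).count x := by
      conv_lhs => rw [e1]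
    refine ⟨⟨σ.take p, σ.drop (p + 2), ?_, hqeq, ?_⟩, ?_, ?_⟩
    · rw [e1'] at hcount
      simp [count_append, count_cons, hux] at hcount ⊢
      omega
    · rw [← e2, ← e1]
      exact flip_symm hflip
    · omega
    · rw [e1'] at hcount
      simp [count_append, count_cons, hux] at hcount
      omega


lemma agile_exists {S : List I → List I} {x y : I} {i j : ℕ} (hxy : x ≠ y)
    (hA : Agile S x i y j) :
    ∃ q, (1 ≤ q ∧ q ≤ i ∧ InR S x i q) ∧ WitP S x y i q := by
  obtain ⟨τ, τ', hτ, hτ', hb, hb'⟩ := hA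
  have hperm : τ.Perm τ' :=
    perm_of_two_letter hxy hτ.2.2 hτ'.2.2 (by rw [hτ.1, hτ'.1]) (by rw [hτ.2.1, hτ'.2.1])
  have hf : ¬ ((fun t => Before x y (S t)) τ ↔ (fun t => Before x y (S t)) τ') := by
    intro hiff
    exact Nat.lt_asymm (hiff.1 hb) (show (S τ').idxOf y < (S τ').idxOf x from hb')
  obtain ⟨ρ, p, hρ, hflip⟩ := find_flip hperm (fun t => Before x y (S t)) hf
  have hflip : ¬ (Before x y (S ρ) ↔ Before x y (S (SwapAt ρ p))) := hflip
  have hlen : p + 1 < ρ.length := by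
    by_contra h
    push_neg at h
    rw [swapAt_of_short h] at hflip
    exact hflip Iff.rfl
  have hp : p < ρ.length := by omega
  have hgc : ρ[p]? = some (ρ[p]) := by
    rw [getElem?_eq_getElem hp]
  have hgd : ρ[p + 1]? = some (ρ[p+1]) := by
    rw [getElem?_eq_getElem hlen]
  have hcd : ρ[p] ≠ ρ[p+1] := by
    intro h
    rw [swapAt_same hgc (h ▸ hgd)] at hflip
    exact hflip Iff.rfl
  have hmemρ : ∀ c ∈ ρ, c = x ∨ c = y := fun c hc => hτ.2.2 c (hρ.mem_iff.1 hc)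
  have hcnt : ρ.count x = i := (hρ.count_eq x).trans hτ.1
  have hcases : (ρ[p] = x ∧ ρ[p+1] = y) ∨ (ρ[p] = y ∧ ρ[p+1] = x) := by
    rcases hmemρ _ (getElem_mem hp) with h1 | h1 <;>
      rcases hmemρ _ (getElem_mem hlen) with h2 | h2 <;> simp_all
  rcases hcases with ⟨h1, h2⟩ | ⟨h1, h2⟩
  · have hAg : AgilePairAt S ρ p x y := ⟨Or.inl ⟨h1 ▸ hgc, h2 ▸ hgd⟩, hflip⟩
    have hqc : (ρ[p]? = some x ∧ (ρ.take (p + 1)).count x = (ρ.take (p + 1)).count x) ∨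
        (ρ[p + 1]? = some x ∧ (ρ.take (p + 2)).count x = (ρ.take (p + 1)).count x) :=
      Or.inl ⟨h1 ▸ hgc, rfl⟩
    obtain ⟨hw, hq1, hq2⟩ := pair_witp hxy.symm hcnt hAg hqc
    exact ⟨_, ⟨hq1, hq2, ⟨ρ, y, p, hcnt, hxy.symm, hAg, hqc⟩⟩, hw⟩
  · have hAg : AgilePairAt S ρ p x y := ⟨Or.inr ⟨h1 ▸ hgc, h2 ▸ hgd⟩, hflip⟩
    have hqc : (ρ[p]? = some x ∧ (ρ.take (p + 1)).count x = (ρ.take (p + 2)).count x) ∨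
        (ρ[p + 1]? = some x ∧ (ρ.take (p + 2)).count x = (ρ.take (p + 2)).count x) :=
      Or.inr ⟨h2 ▸ hgd, rfl⟩
    obtain ⟨hw, hq1, hq2⟩ := pair_witp hxy.symm hcnt hAg hqc
    exact ⟨_, ⟨hq1, hq2, ⟨ρ, y, p, hcnt, hxy.symm, hAg, hqc⟩⟩, hw⟩

lemma inr_witp {S : List I → List I} {x : I} {i q : ℕ} (h : InR S x i q) :
    ∃ u, u ≠ x ∧ WitP S x u i q := by
  obtain ⟨σ, u, p, hcnt, hux, hAg, hqc⟩ := h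
  exact ⟨u, hux, (pair_witp hux hcnt hAg hqc).1⟩


lemma proj2_cons_pos {a x y : I} (h : a = x ∨ a = y) (l : List I) :
    proj2 x y (a :: l) = a :: proj2 x y l := by
  simp [proj2, filter_cons, h]

lemma proj2_cons_neg {a x y : I} (h : ¬ (a = x ∨ a = y)) (l : List I) :
    proj2 x y (a :: l) = proj2 x y l := by
  simp [proj2, filter_cons, h]

lemma proj2_append (x y : I) (l l' : List I) :
    proj2 x y (l ++ l') = proj2 x y l ++ proj2 x y l' := by
  simp [proj2, filter_append]

lemma proj2_twoletter (x u : I) (l : List I) : ∀ c ∈ proj2 x u l, c = x ∨ c = u := by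
  intro c hc
  rw [proj2, mem_filter] at hc
  simpa using hc.2

lemma count_proj2_x (x u : I) (l : List I) : (proj2 x u l).count x = l.count x :=
  count_filter (by simp)

def TwoWitP (S : List I → List I) (x u : I) (i q : ℕ) : Prop :=
  ∃ α β : List I, (∀ c ∈ α, c = x ∨ c = u) ∧ (∀ c ∈ β, c = x ∨ c = u) ∧
    (α ++ x :: u :: β).count x = i ∧ q = α.count x + 1 ∧
    Flip S x u (α ++ x :: u :: β) (α ++ u :: x :: β)

lemma witp_two {S : List I → List I} (hproj : Projective S) {x u : I} {i q : ℕ}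
    (h : WitP S x u i q) : TwoWitP S x u i q := by
  obtain ⟨α, β, hc, hq, hf⟩ := h
  have h1 : proj2 x u (α ++ x :: u :: β) = proj2 x u α ++ x :: u :: proj2 x u β := by
    rw [proj2_append, proj2_cons_pos (Or.inl rfl), proj2_cons_pos (Or.inr rfl)]
  have h2 : proj2 x u (α ++ u :: x :: β) = proj2 x u α ++ u :: x :: proj2 x u β := by
    rw [proj2_append, proj2_cons_pos (Or.inr rfl), proj2_cons_pos (Or.inl rfl)]
  refine ⟨proj2 x u α, proj2 x u β, proj2_twoletter x u α, proj2_twoletter x u β, ?_, ?_, ?_⟩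
  · rw [← h1, count_proj2_x, hc]
  · rw [hq, count_proj2_x]
  · intro hiff
    exact hf ((before_eq_of_proj hproj h1).trans
      (hiff.trans (before_eq_of_proj hproj h2).symm))

lemma split_at_count (x : I) : ∀ (l : List I) (n : ℕ), n < l.count x →
    ∃ l₁ l₂, l = l₁ ++ x :: l₂ ∧ l₁.count x = n := by
  intro l
  induction l with
  | nil => simp
  | cons c l ih =>
    intro n hn
    by_cases hcx : c = x
    · cases n with
      | zero => exact ⟨[], l, by simp [hcx], by simp⟩
      | succ m =>
        have hm : m < l.count x := by
          rw [hcx] at hn; simp [count_cons] at hn; omega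
        obtain ⟨l₁, l₂, he, hcnt⟩ := ih m hm
        exact ⟨c :: l₁, l₂, by rw [cons_append, he], by simp [count_cons, hcx, hcnt]⟩
    · have hn' : n < l.count x := by simpa [count_cons, hcx] using hn
      obtain ⟨l₁, l₂, he, hcnt⟩ := ih n hn'
      exact ⟨c :: l₁, l₂, by rw [cons_append, he], by simp [count_cons, hcx, hcnt]⟩

lemma mg_ex {x u v : I} (hu : u ≠ x) (hv : v ≠ x) (huv : u ≠ v) :
    ∀ (n : ℕ) (s t : List I), s.length + t.length ≤ n →
      (∀ c ∈ s, c = x ∨ c = u) → (∀ c ∈ t, c = x ∨ c = v) →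
      s.count x = t.count x →
      ∃ ρ, proj2 x u ρ = s ∧ proj2 x v ρ = t := by
  intro n
  induction n with
  | zero =>
    intro s t hlen _ _ _
    have hs : s = [] := by cases s <;> simp_all
    have ht : t = [] := by cases t <;> simp_all
    subst hs; subst ht
    exact ⟨[], rfl, rfl⟩
  | succ n ih =>
    intro s t hlen hs ht hc
    cases s with
    | nil =>
      have hx : x ∉ t := by
        rw [← count_eq_zero, ← hc]; rfl
      refine ⟨t, ?_, ?_⟩
      · rw [proj2, filter_eq_nil_iff]
        intro a ha
        have hav : a = v := (ht a ha).resolve_left (fun h => hx (h ▸ ha))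
        subst hav
        simp [hv, huv.symm]
      · rw [proj2, filter_eq_self]
        intro a ha
        rcases ht a ha with h | h <;> simp [h]
    | cons a s =>
      by_cases hax : a = x
      · rw [hax] at hc hs ⊢
        cases t with
        | nil => simp [count_cons] at hc
        | cons b t =>
          by_cases hbx : b = x
          · rw [hbx] at hc ht ⊢
            have hc' : s.count x = t.count x := by simp [count_cons] at hc; omega
            obtain ⟨ρ, h1, h2⟩ := ih s t (by simp at hlen ⊢; omega)
              (fun c hcm => hs c (mem_cons_of_mem _ hcm))
              (fun c hcm => ht c (mem_cons_of_mem _ hcm)) hc'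
            exact ⟨x :: ρ, by rw [proj2_cons_pos (Or.inl rfl), h1],
              by rw [proj2_cons_pos (Or.inl rfl), h2]⟩
          · have hbv : b = v := (ht b (mem_cons_self)).resolve_left hbx
            rw [hbv] at hc ht ⊢
            have hc' : (x :: s).count x = t.count x := by
              simpa [count_cons, hv] using hc
            obtain ⟨ρ, h1, h2⟩ := ih (x :: s) t (by simp at hlen ⊢; omega) hs
              (fun c hcm => ht c (mem_cons_of_mem _ hcm)) hc'
            exact ⟨v :: ρ, by rw [proj2_cons_neg (by simp [hv, huv.symm]), h1],
              by rw [proj2_cons_pos (Or.inr rfl), h2]⟩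
      · have hau : a = u := (hs a (mem_cons_self)).resolve_left hax
        rw [hau] at hc hs ⊢
        have hc' : s.count x = t.count x := by simpa [count_cons, hu] using hc
        obtain ⟨ρ, h1, h2⟩ := ih s t (by simp at hlen ⊢; omega)
          (fun c hcm => hs c (mem_cons_of_mem _ hcm)) ht hc'
        exact ⟨u :: ρ, by rw [proj2_cons_pos (Or.inr rfl), h1],
          by rw [proj2_cons_neg (by simp [hu, huv]), h2]⟩


lemma filter_swap_eq {p : I → Bool} {c d : I} (A B : List I)
    (h : p c = false ∨ p d = false) :
    List.filter p (A ++ c :: d :: B) = List.filter p (A ++ d :: c :: B) := by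
  rcases h with h | h <;> cases h2 : p c <;> cases h3 : p d <;>
    simp_all [filter_append, filter_cons]

lemma adj_of_flip {S : List I → List I} {L0 : List I}
    (hperm : ∀ σ, (S σ).Perm L0) (hnodup : L0.Nodup) (hproj : Projective S)
    {a b c d : I} {A B : List I} (hab : a ≠ b)
    (hcd : (c = a ∧ d = b) ∨ (c = b ∧ d = a))
    (hflip : Flip S a b (A ++ c :: d :: B) (A ++ d :: c :: B)) :
    (S (A ++ c :: d :: B)).idxOf b = (S (A ++ c :: d :: B)).idxOf a + 1 ∨
    (S (A ++ c :: d :: B)).idxOf a = (S (A ++ c :: d :: B)).idxOf b + 1 := by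
  set σ := A ++ c :: d :: B with hσ
  set σ' := A ++ d :: c :: B with hσ'
  set L := S σ with hL
  set L' := S σ' with hL'
  have hLnd : L.Nodup := ((hperm σ).nodup_iff).2 hnodup
  have hmm : ∀ e : I, e ∈ L ↔ e ∈ L' := fun e => by
    rw [(hperm σ).mem_iff, (hperm σ').mem_iff]
  have key : ∀ e f : I, (e ≠ a ∧ f ≠ a) ∨ (e ≠ b ∧ f ≠ b) →
      (Before e f L ↔ Before e f L') := by
    intro e f hcond
    have hpr : proj2 e f σ = proj2 e f σ' := by
      apply filter_swap_eq
      rcases hcd with ⟨hc, hd⟩ | ⟨hc, hd⟩ <;> rcases hcond with ⟨h1, h2⟩ | ⟨h1, h2⟩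
      · left; rw [hc]; simp [Ne.symm h1, Ne.symm h2]
      · right; rw [hd]; simp [Ne.symm h1, Ne.symm h2]
      · right; rw [hd]; simp [Ne.symm h1, Ne.symm h2]
      · left; rw [hc]; simp [Ne.symm h1, Ne.symm h2]
    exact (hproj e f σ).trans (hpr ▸ (hproj e f σ').symm)
  rcases Nat.lt_trichotomy (L.idxOf a) (L.idxOf b) with h | h | h
  · left
    by_contra hne
    have h2 : L.idxOf a + 1 < L.idxOf b := by omega
    have hlen : L.idxOf a + 1 < L.length :=
      lt_of_lt_of_le h2 idxOf_le_length
    set w := L[L.idxOf a + 1] with hw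
    have hwmem : w ∈ L := getElem_mem hlen
    have hiw : L.idxOf w = L.idxOf a + 1 := by
      have h3 : L.idxOf w < L.length := idxOf_lt_length_iff.2 hwmem
      exact hLnd.getElem_inj_iff.1 (getElem_idxOf h3)
    have hwa : w ≠ a := fun h' => by rw [h'] at hiw; omega
    have hwb : w ≠ b := fun h' => by rw [h'] at hiw; omega
    have h4 : Before a w L := by show L.idxOf a < L.idxOf w; omega
    have h5 : Before w b L := by show L.idxOf w < L.idxOf b; omega
    have h4' : Before a w L' := (key a w (Or.inr ⟨hab, hwb⟩)).1 h4
    have h5' : Before w b L' := (key w b (Or.inl ⟨hwa, Ne.symm hab⟩)).1 h5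
    exact hflip (iff_of_true h (Nat.lt_trans h4' h5'))
  · exfalso
    have hnab : ¬ Before a b L := by show ¬ (L.idxOf a < L.idxOf b); omega
    have hab' : Before a b L' := by
      by_contra h'
      exact hflip (iff_of_false hnab h')
    have hbL : b ∉ L := by
      intro hbL
      by_cases haL : a ∈ L
      · exact hab ((idxOf_inj haL).1 h)
      · have e1 : L.idxOf a = L.length := idxOf_eq_length_iff.2 haL
        have e2 : L.idxOf b < L.length := idxOf_lt_length_iff.2 hbL
        omega
    have haL : a ∉ L := by
      intro haL
      have e1 : L.idxOf b = L.length := idxOf_eq_length_iff.2 hbL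
      have e2 : L.idxOf a < L.length := idxOf_lt_length_iff.2 haL
      omega
    have h1 : L'.idxOf a = L'.length := idxOf_eq_length_iff.2 (fun h' => haL ((hmm a).2 h'))
    have h2 : L'.idxOf b ≤ L'.length := idxOf_le_length
    have h3 : L'.idxOf a < L'.idxOf b := hab'
    omega
  · right
    by_contra hne
    have h2 : L.idxOf b + 1 < L.idxOf a := by omega
    have hlen : L.idxOf b + 1 < L.length :=
      lt_of_lt_of_le h2 idxOf_le_length
    set w := L[L.idxOf b + 1] with hw
    have hwmem : w ∈ L := getElem_mem hlen
    have hiw : L.idxOf w = L.idxOf b + 1 := by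
      have h3 : L.idxOf w < L.length := idxOf_lt_length_iff.2 hwmem
      exact hLnd.getElem_inj_iff.1 (getElem_idxOf h3)
    have hwa : w ≠ a := fun h' => by rw [h'] at hiw; omega
    have hwb : w ≠ b := fun h' => by rw [h'] at hiw; omega
    have h4 : Before b w L := by show L.idxOf b < L.idxOf w; omega
    have h5 : Before w a L := by show L.idxOf w < L.idxOf a; omega
    have h4' : Before b w L' := (key b w (Or.inl ⟨Ne.symm hab, hwa⟩)).1 h4
    have h5' : Before w a L' := (key w a (Or.inr ⟨hwb, hab⟩)).1 h5
    have hnab : ¬ Before a b L := by show ¬ (L.idxOf a < L.idxOf b); omega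
    have hab' : Before a b L' := by
      by_contra h'
      exact hflip (iff_of_false hnab h')
    have g1 : L'.idxOf a < L'.idxOf b := hab'
    have g2 : L'.idxOf b < L'.idxOf w := h4'
    have g3 : L'.idxOf w < L'.idxOf a := h5'
    omega

lemma mem_of_flip {S : List I → List I} {L0 : List I}
    (hperm : ∀ σ, (S σ).Perm L0) {a b : I} {σ σ' : List I}
    (h : Flip S a b σ σ') : a ∈ L0 ∧ b ∈ L0 := by
  have key : ∀ τ τ' : List I, Before a b (S τ) → ¬ Before a b (S τ') →
      a ∈ L0 ∧ b ∈ L0 := by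
    intro τ τ' h1 h2
    have g1 : (S τ).idxOf a < (S τ).idxOf b := h1
    have ha : a ∈ S τ := by
      rw [← idxOf_lt_length_iff]
      have := idxOf_le_length (a := b) (l := S τ)
      omega
    have haL0 : a ∈ L0 := (hperm τ).mem_iff.1 ha
    refine ⟨haL0, ?_⟩
    by_contra hb
    have hb' : b ∉ S τ' := fun h' => hb ((hperm τ').mem_iff.1 h')
    have e1 : (S τ').idxOf b = (S τ').length := idxOf_eq_length_iff.2 hb'
    have e2 : ¬ ((S τ').idxOf a < (S τ').idxOf b) := h2
    have e3 : a ∈ S τ' := (hperm τ').mem_iff.2 haL0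
    have e4 : (S τ').idxOf a < (S τ').length := idxOf_lt_length_iff.2 e3
    omega
  by_cases h1 : Before a b (S σ)
  · have h2 : ¬ Before a b (S σ') := fun h' => h (iff_of_true h1 h')
    exact key σ σ' h1 h2
  · have h2 : Before a b (S σ') := by
      by_contra h'
      exact h (iff_of_false h1 h')
    exact key σ' σ h2 h1


lemma D_lt {S : List I → List I} {L0 : List I}
    (hperm : ∀ σ, (S σ).Perm L0) (hnodup : L0.Nodup) (hproj : Projective S)
    {x u v : I} (hux : u ≠ x) (hvx : v ≠ x) (huv : u ≠ v)
    {i qu qv : ℕ}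
    (h1 : TwoWitP S x u i qu) (h2 : TwoWitP S x v i qv)
    (hlt : qu < qv) : False := by
  obtain ⟨α, β, hα, hβ, hcα, hqα, hf1⟩ := h1
  obtain ⟨γ, δ, hγ, hδ, hcγ, hqγ, hf2⟩ := h2
  have hcc : α.count x + 1 + β.count x = i := by
    have h := hcα
    simp [count_append, count_cons, hux, Ne.symm hux] at h
    omega
  have hcc2 : γ.count x + 1 + δ.count x = i := by
    have h := hcγ
    simp [count_append, count_cons, hvx, Ne.symm hvx] at h
    omega
  have hlt' : α.count x < γ.count x := by omega
  obtain ⟨γ₁, γ₂, hγe, hγ₁c⟩ := split_at_count x γ (α.count x) hlt'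
  have hγcc : γ₁.count x + 1 + γ₂.count x = γ.count x := by
    have h := congrArg (count x) hγe
    simp [count_append, count_cons] at h
    omega
  obtain ⟨β₁, β₂, hβe, hβ₁c⟩ := split_at_count x β (γ.count x - α.count x - 1)
    (by omega)
  have hβcc : β₁.count x + 1 + β₂.count x = β.count x := by
    have h := congrArg (count x) hβe
    simp [count_append, count_cons] at h
    omega
  subst hγe
  subst hβe
  -- memberships of pieces
  have hγ₁m : ∀ c ∈ γ₁, c = x ∨ c = v := fun c hc => hγ c (mem_append_left _ hc)
  have hγ₂m : ∀ c ∈ γ₂, c = x ∨ c = v := fun c hc =>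
    hγ c (mem_append_right _ (mem_cons_of_mem _ hc))
  have hβ₁m : ∀ c ∈ β₁, c = x ∨ c = u := fun c hc => hβ c (mem_append_left _ hc)
  have hβ₂m : ∀ c ∈ β₂, c = x ∨ c = u := fun c hc =>
    hβ c (mem_append_right _ (mem_cons_of_mem _ hc))
  -- merges
  obtain ⟨W₁, hW₁u, hW₁v⟩ := mg_ex hux hvx huv (α.length + γ₁.length) α γ₁ le_rfl
    hα hγ₁m (by omega)
  obtain ⟨W₂, hW₂u, hW₂v⟩ := mg_ex hux hvx huv (β₁.length + γ₂.length) β₁ γ₂ le_rfl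
    hβ₁m hγ₂m (by omega)
  obtain ⟨W₃, hW₃u, hW₃v⟩ := mg_ex hux hvx huv (β₂.length + δ.length) β₂ δ le_rfl
    hβ₂m hδ (by omega)
  have pvu : ¬ (v = x ∨ v = u) := by simp [hvx, huv.symm]
  have puv : ¬ (u = x ∨ u = v) := by simp [hux, huv]
  -- projections
  have P1 : proj2 x u (W₁ ++ x :: u :: (W₂ ++ x :: v :: W₃)) =
      α ++ x :: u :: (β₁ ++ x :: β₂) := by
    rw [proj2_append, proj2_cons_pos (Or.inl rfl), proj2_cons_pos (Or.inr rfl),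
      proj2_append, proj2_cons_pos (Or.inl rfl), proj2_cons_neg pvu,
      hW₁u, hW₂u, hW₃u]
  have P2 : proj2 x u (W₁ ++ u :: x :: (W₂ ++ x :: v :: W₃)) =
      α ++ u :: x :: (β₁ ++ x :: β₂) := by
    rw [proj2_append, proj2_cons_pos (Or.inr rfl), proj2_cons_pos (Or.inl rfl),
      proj2_append, proj2_cons_pos (Or.inl rfl), proj2_cons_neg pvu,
      hW₁u, hW₂u, hW₃u]
  have P3 : proj2 x v (W₁ ++ x :: u :: (W₂ ++ x :: v :: W₃)) =
      γ₁ ++ x :: (γ₂ ++ x :: v :: δ) := by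
    rw [proj2_append, proj2_cons_pos (Or.inl rfl), proj2_cons_neg puv,
      proj2_append, proj2_cons_pos (Or.inl rfl), proj2_cons_pos (Or.inr rfl),
      hW₁v, hW₂v, hW₃v]
  have P4 : proj2 x v (W₁ ++ u :: x :: (W₂ ++ x :: v :: W₃)) =
      γ₁ ++ x :: (γ₂ ++ x :: v :: δ) := by
    rw [proj2_append, proj2_cons_neg puv, proj2_cons_pos (Or.inl rfl),
      proj2_append, proj2_cons_pos (Or.inl rfl), proj2_cons_pos (Or.inr rfl),
      hW₁v, hW₂v, hW₃v]
  have P5 : proj2 x v (W₁ ++ x :: u :: (W₂ ++ v :: x :: W₃)) =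
      γ₁ ++ x :: (γ₂ ++ v :: x :: δ) := by
    rw [proj2_append, proj2_cons_pos (Or.inl rfl), proj2_cons_neg puv,
      proj2_append, proj2_cons_pos (Or.inr rfl), proj2_cons_pos (Or.inl rfl),
      hW₁v, hW₂v, hW₃v]
  have P6 : proj2 x v (W₁ ++ u :: x :: (W₂ ++ v :: x :: W₃)) =
      γ₁ ++ x :: (γ₂ ++ v :: x :: δ) := by
    rw [proj2_append, proj2_cons_neg puv, proj2_cons_pos (Or.inl rfl),
      proj2_append, proj2_cons_pos (Or.inr rfl), proj2_cons_pos (Or.inl rfl),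
      hW₁v, hW₂v, hW₃v]
  -- normalize the given flips
  have hf2' : Flip S x v (γ₁ ++ x :: (γ₂ ++ x :: v :: δ)) (γ₁ ++ x :: (γ₂ ++ v :: x :: δ)) := by
    have e1 : (γ₁ ++ x :: γ₂) ++ x :: v :: δ = γ₁ ++ x :: (γ₂ ++ x :: v :: δ) := by
      simp [append_assoc]
    have e2 : (γ₁ ++ x :: γ₂) ++ v :: x :: δ = γ₁ ++ x :: (γ₂ ++ v :: x :: δ) := by
      simp [append_assoc]
    rw [e1, e2] at hf2
    exact hf2
  -- flips on the merged sequence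
  have F1 : Flip S x u (W₁ ++ x :: u :: (W₂ ++ x :: v :: W₃))
      (W₁ ++ u :: x :: (W₂ ++ x :: v :: W₃)) := fun hiff => hf1
    ((before_eq_of_proj hproj P1).symm.trans
      (hiff.trans (before_eq_of_proj hproj P2)))
  have F2 : Flip S x v (W₁ ++ x :: u :: (W₂ ++ x :: v :: W₃))
      (W₁ ++ x :: u :: (W₂ ++ v :: x :: W₃)) := fun hiff => hf2'
    ((before_eq_of_proj hproj P3).symm.trans
      (hiff.trans (before_eq_of_proj hproj P5)))
  have F3 : Flip S x v (W₁ ++ u :: x :: (W₂ ++ x :: v :: W₃))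
      (W₁ ++ u :: x :: (W₂ ++ v :: x :: W₃)) := fun hiff => hf2'
    ((before_eq_of_proj hproj P4).symm.trans
      (hiff.trans (before_eq_of_proj hproj P6)))
  have N1 : Before x v (S (W₁ ++ x :: u :: (W₂ ++ x :: v :: W₃))) ↔
      Before x v (S (W₁ ++ u :: x :: (W₂ ++ x :: v :: W₃))) :=
    (before_eq_of_proj hproj P3).trans (before_eq_of_proj hproj P4).symm
  -- adjacency
  have Adj1 := adj_of_flip hperm hnodup hproj (Ne.symm hux) (Or.inl ⟨rfl, rfl⟩) F1
  have Adj3 := adj_of_flip hperm hnodup hproj (Ne.symm hux) (Or.inr ⟨rfl, rfl⟩) (flip_symm F1)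
  have hsh : (W₁ ++ x :: u :: W₂) ++ x :: v :: W₃ = W₁ ++ x :: u :: (W₂ ++ x :: v :: W₃) := by
    simp [append_assoc]
  have hsh3 : (W₁ ++ x :: u :: W₂) ++ v :: x :: W₃ = W₁ ++ x :: u :: (W₂ ++ v :: x :: W₃) := by
    simp [append_assoc]
  have hsh2 : (W₁ ++ u :: x :: W₂) ++ x :: v :: W₃ = W₁ ++ u :: x :: (W₂ ++ x :: v :: W₃) := by
    simp [append_assoc]
  have hsh4 : (W₁ ++ u :: x :: W₂) ++ v :: x :: W₃ = W₁ ++ u :: x :: (W₂ ++ v :: x :: W₃) := by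
    simp [append_assoc]
  have F2' : Flip S x v ((W₁ ++ x :: u :: W₂) ++ x :: v :: W₃)
      ((W₁ ++ x :: u :: W₂) ++ v :: x :: W₃) := by rw [hsh, hsh3]; exact F2
  have F3' : Flip S x v ((W₁ ++ u :: x :: W₂) ++ x :: v :: W₃)
      ((W₁ ++ u :: x :: W₂) ++ v :: x :: W₃) := by rw [hsh2, hsh4]; exact F3
  have Adj2 := adj_of_flip hperm hnodup hproj (Ne.symm hvx) (Or.inl ⟨rfl, rfl⟩) F2'
  have Adj4 := adj_of_flip hperm hnodup hproj (Ne.symm hvx) (Or.inl ⟨rfl, rfl⟩) F3'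
  rw [hsh] at Adj2
  rw [hsh2] at Adj4
  -- memberships
  obtain ⟨hxm, hum⟩ := mem_of_flip hperm F1
  obtain ⟨-, hvm⟩ := mem_of_flip hperm F2
  set L := S (W₁ ++ x :: u :: (W₂ ++ x :: v :: W₃)) with hLdef
  set L2 := S (W₁ ++ u :: x :: (W₂ ++ x :: v :: W₃)) with hL2def
  have xL : x ∈ L := (hperm _).mem_iff.2 hxm
  have uL : u ∈ L := (hperm _).mem_iff.2 hum
  have vL : v ∈ L := (hperm _).mem_iff.2 hvm
  have xL2 : x ∈ L2 := (hperm _).mem_iff.2 hxm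
  have uL2 : u ∈ L2 := (hperm _).mem_iff.2 hum
  have vL2 : v ∈ L2 := (hperm _).mem_iff.2 hvm
  have hne_uv_L : L.idxOf u ≠ L.idxOf v := fun h => huv ((idxOf_inj uL).1 h)
  have hne_uv_L2 : L2.idxOf u ≠ L2.idxOf v := fun h => huv ((idxOf_inj uL2).1 h)
  have hne_xu_L2 : L2.idxOf x ≠ L2.idxOf u := fun h => hux ((idxOf_inj xL2).1 h).symm
  have hne_xv_L2 : L2.idxOf x ≠ L2.idxOf v := fun h => hvx ((idxOf_inj xL2).1 h).symm
  rcases Adj1 with hA | hA <;> rcases Adj2 with hB | hB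
  · exact hne_uv_L (by omega)
  · -- u right after x, v right before x in L
    have bxu : Before x u L := by show L.idxOf x < L.idxOf u; omega
    have nbxu2 : ¬ Before x u L2 := fun h' => F1 (iff_of_true bxu h')
    have bux2 : L2.idxOf u < L2.idxOf x := by
      have h' : ¬ (L2.idxOf x < L2.idxOf u) := nbxu2
      omega
    have h3 : L2.idxOf x = L2.idxOf u + 1 := by
      rcases Adj3 with h3 | h3
      · omega
      · exact h3
    have nbxv : ¬ Before x v L := by show ¬ (L.idxOf x < L.idxOf v); omega
    have nbxv2 : ¬ Before x v L2 := fun h' => nbxv (N1.2 h')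
    have bvx2 : L2.idxOf v < L2.idxOf x := by
      have h' : ¬ (L2.idxOf x < L2.idxOf v) := nbxv2
      omega
    have h4 : L2.idxOf x = L2.idxOf v + 1 := by
      rcases Adj4 with h4 | h4
      · omega
      · exact h4
    exact hne_uv_L2 (by omega)
  · -- u right before x, v right after x in L
    have nbxu : ¬ Before x u L := by show ¬ (L.idxOf x < L.idxOf u); omega
    have bxu2 : Before x u L2 := by
      by_contra h'
      exact F1 (iff_of_false nbxu h')
    have g2 : L2.idxOf x < L2.idxOf u := bxu2
    have h3 : L2.idxOf u = L2.idxOf x + 1 := by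
      rcases Adj3 with h3 | h3
      · exact h3
      · omega
    have bxv : Before x v L := by show L.idxOf x < L.idxOf v; omega
    have bxv2 : Before x v L2 := N1.1 bxv
    have g3 : L2.idxOf x < L2.idxOf v := bxv2
    have h4 : L2.idxOf v = L2.idxOf x + 1 := by
      rcases Adj4 with h4 | h4
      · exact h4
      · omega
    exact hne_uv_L2 (by omega)
  · exact hne_uv_L (by omega)

lemma witp_eq {S : List I → List I} {L0 : List I}
    (hperm : ∀ σ, (S σ).Perm L0) (hnodup : L0.Nodup) (hproj : Projective S)
    {x u v : I} (hux : u ≠ x) (hvx : v ≠ x) (huv : u ≠ v)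
    {i qu qv : ℕ} (h1 : WitP S x u i qu) (h2 : WitP S x v i qv) : qu = qv := by
  rcases Nat.lt_trichotomy qu qv with h | h | h
  · exact (D_lt hperm hnodup hproj hux hvx huv (witp_two hproj h1) (witp_two hproj h2) h).elim
  · exact h
  · exact (D_lt hperm hnodup hproj hvx hux huv.symm (witp_two hproj h2) (witp_two hproj h1) h).elim

end RUaux

/-- If both pairs `x^i, y^j` and `x^i, z^k` are agile (with `y ≠ z`),
then there is exactly one index `q` with `1 ≤ q ≤ i` such that the `q`-th request to
`x` participates in an agile pair, i.e. `|R(x^i)| = 1`. -/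
theorem R_unique
    {I : Type} [DecidableEq I] (S : List I → List I) (L0 : List I)
    (hperm : ∀ σ, (S σ).Perm L0) (hnodup : L0.Nodup)
    (hproj : Projective S)
    (x y z : I) (hxy : x ≠ y) (hxz : x ≠ z) (hyz : y ≠ z)
    (i j k : ℕ)
    (hA1 : Agile S x i y j) (hA2 : Agile S x i z k) :
    ∃! q : ℕ, 1 ≤ q ∧ q ≤ i ∧ InR S x i q := by
  obtain ⟨qy, hqy, hwy⟩ := RUaux.agile_exists hxy hA1
  obtain ⟨qz, hqz, hwz⟩ := RUaux.agile_exists hxz hA2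
  have key : ∀ q, InR S x i q → q = qy := by
    intro q hq
    obtain ⟨u, hux, hw⟩ := RUaux.inr_witp hq
    by_cases huy : u = y
    · have e1 : q = qz := RUaux.witp_eq hperm hnodup hproj hux (Ne.symm hxz)
        (huy ▸ hyz) hw hwz
      have e2 : qy = qz := RUaux.witp_eq hperm hnodup hproj (Ne.symm hxy)
        (Ne.symm hxz) hyz hwy hwz
      rw [e1, e2]
    · exact RUaux.witp_eq hperm hnodup hproj hux (Ne.symm hxy) huy hw hwy
  exact ⟨qy, hqy, fun q hq => key q hq.2.2⟩
end

section
/- Let x_(q), y_(l) be an agile pair in some sequence λ ∈ perm(x^i y^j) for a deterministic projective algorithm, and suppose |R(x^i)| = |R(y^j)| = 1. Then in every sequence σ ∈ perm(x^i y^j) in which the q-th request to x and the l-th request to y are adjacent, transposing them changes the relative order of x and y in S(σ). -/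
/-- At positions `p`, `p+1` of `σ`, the `q`-th request to `x` and the `l`-th request to
`y` stand adjacent (in either order). -/
def PairAtPos {I : Type} [DecidableEq I] (σ : List I) (p : ℕ)
    (x : I) (q : ℕ) (y : I) (l : ℕ) : Prop :=
  (σ[p]? = some x ∧ σ[p + 1]? = some y ∧
    (σ.take (p + 1)).count x = q ∧ (σ.take (p + 2)).count y = l) ∨
  (σ[p]? = some y ∧ σ[p + 1]? = some x ∧
    (σ.take (p + 1)).count y = l ∧ (σ.take (p + 2)).count x = q)

set_option linter.unusedSectionVars false

namespace AgileAux
variable {I : Type} [DecidableEq I]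

lemma drop_of_get? {σ : List I} {p : ℕ} {a : I} (h : σ[p]? = some a) :
    σ.drop p = a :: σ.drop (p + 1) := by
  have hn : p < σ.length := (List.getElem?_eq_some_iff.mp h).1
  rw [List.drop_eq_getElem_cons hn]
  simp only [List.getElem?_eq_getElem hn, Option.some.injEq] at h
  rw [h]

lemma decomp_of_get? {σ : List I} {p : ℕ} {a b : I}
    (ha : σ[p]? = some a) (hb : σ[p + 1]? = some b) :
    ∃ u v : List I, σ = u ++ a :: b :: v ∧ u.length = p := by
  refine ⟨σ.take p, σ.drop (p + 2), ?_, ?_⟩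
  · conv_lhs => rw [← List.take_append_drop p σ]
    rw [drop_of_get? ha, drop_of_get? hb]
  · have hn : p < σ.length := (List.getElem?_eq_some_iff.mp ha).1
    simp [List.length_take]; omega

lemma swapAt_decomp (u v : List I) (a b : I) :
    SwapAt (u ++ a :: b :: v) u.length = u ++ b :: a :: v := by
  unfold SwapAt
  rw [List.take_left, List.drop_left]
  have h2 : u ++ a :: b :: v = (u ++ [a, b]) ++ v := by simp
  have h3 : (u ++ a :: b :: v).drop (u.length + 2) = v := by
    rw [h2]
    have : u.length + 2 = (u ++ [a, b]).length := by simp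
    rw [this, List.drop_left]
  rw [h3]
  simp

lemma take_add_one (u v : List I) (a : I) :
    (u ++ a :: v).take (u.length + 1) = u ++ [a] := by
  rw [List.take_append]; simp

lemma take_add_two (u v : List I) (a b : I) :
    (u ++ a :: b :: v).take (u.length + 2) = u ++ [a, b] := by
  rw [List.take_append]; simp

lemma get_fst (u v : List I) (a : I) : (u ++ a :: v)[u.length]? = some a := by
  rw [List.getElem?_append_right (le_refl _)]; simp

lemma get_snd (u v : List I) (a b : I) :
    (u ++ a :: b :: v)[u.length + 1]? = some b := by
  rw [List.getElem?_append_right (by omega)]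
  have : u.length + 1 - u.length = 1 := by omega
  rw [this]; rfl

/-- `x_q` occurs before `y_l` in `τ`. -/
def Ox (x y : I) (q l : ℕ) (τ : List I) : Prop :=
  ∃ n, q ≤ (τ.take n).count x ∧ (τ.take n).count y < l

lemma counts_take_pair {x y : I} (hxy : x ≠ y) (v : List I) (m : ℕ) :
    ((y :: x :: v).take m).count x ≤ ((x :: y :: v).take m).count x ∧
    ((x :: y :: v).take m).count y ≤ ((y :: x :: v).take m).count y := by
  match m with
  | 0 => simp
  | 1 => simp [List.count_cons, hxy, hxy.symm]
  | (m + 2) =>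
    simp [List.take_succ_cons, List.count_cons]
    omega

lemma ox_mono {x y : I} (hxy : x ≠ y) {q l : ℕ} (u v : List I) :
    Ox x y q l (u ++ y :: x :: v) → Ox x y q l (u ++ x :: y :: v) := by
  rintro ⟨n, h1, h2⟩
  refine ⟨n, ?_, ?_⟩ <;>
  · rw [List.take_append, List.count_append] at h1 h2 ⊢
    have e1 := (counts_take_pair hxy v (n - u.length)).1
    have e2 := (counts_take_pair hxy v (n - u.length)).2
    omega

lemma ox_desig {x y : I} (hxy : x ≠ y) {q l : ℕ} {u : List I} (v : List I)
    (hq : u.count x + 1 = q) (hl : u.count y + 1 = l) :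
    Ox x y q l (u ++ x :: y :: v) := by
  refine ⟨u.length + 1, ?_, ?_⟩ <;>
  · rw [show u ++ x :: y :: v = u ++ x :: (y :: v) from rfl, take_add_one]
    simp [List.count_append, List.count_cons, hxy, hxy.symm]
    omega

lemma not_ox_desig {x y : I} (hxy : x ≠ y) {q l : ℕ} {u : List I} (v : List I)
    (hq : u.count x + 1 = q) (hl : u.count y + 1 = l) :
    ¬ Ox x y q l (u ++ y :: x :: v) := by
  rintro ⟨n, h1, h2⟩
  rw [List.take_append, List.count_append] at h1 h2
  have cx : (u.take n).count x ≤ u.count x := (List.take_sublist n u).count_le x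
  have cy : (u.take n).count y ≤ u.count y := (List.take_sublist n u).count_le y
  have hm : 2 ≤ n - u.length := by
    by_contra hm
    have : n - u.length = 0 ∨ n - u.length = 1 := by omega
    rcases this with h | h <;> rw [h] at h1 <;>
      simp [List.count_cons, hxy, hxy.symm] at h1 <;> omega
  obtain ⟨m, hm'⟩ : ∃ m, n - u.length = m + 2 := ⟨n - u.length - 2, by omega⟩
  have hn : u.length ≤ n := by omega
  rw [List.take_of_length_le hn] at h2
  rw [hm'] at h2
  simp [List.take_succ_cons, List.count_cons, hxy, hxy.symm] at h2
  omega

lemma ox_X {x y : I} (hxy : x ≠ y) {q l i j : ℕ} (hq : 1 ≤ q) (hqi : q ≤ i) (hl : 1 ≤ l) :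
    Ox x y q l (List.replicate i x ++ List.replicate j y) := by
  refine ⟨q, ?_, ?_⟩ <;>
  · rw [List.take_append]
    simp [List.take_replicate, List.count_replicate, List.count_append, hxy, hxy.symm]
    omega

lemma not_ox_Y {x y : I} (hxy : x ≠ y) {q l i j : ℕ} (hq : 1 ≤ q) (hlj : l ≤ j) :
    ¬ Ox x y q l (List.replicate j y ++ List.replicate i x) := by
  rintro ⟨n, h1, h2⟩
  rw [List.take_append] at h1 h2
  simp [List.take_replicate, List.count_replicate, List.count_append, hxy, hxy.symm,
    List.length_replicate] at h1 h2
  omega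

/-- number of (y,x) inversions -/
def invYX (x y : I) : List I → ℕ
  | [] => 0
  | z :: t => (if z = y then t.count x else 0) + invYX x y t

lemma invYX_zero {x y : I} (hxy : x ≠ y) :
    ∀ τ : List I, (∀ z ∈ τ, z = x ∨ z = y) → invYX x y τ = 0 →
      τ = List.replicate (τ.count x) x ++ List.replicate (τ.count y) y := by
  intro τ
  induction τ with
  | nil => simp
  | cons z t ih =>
    intro hmem hz
    simp only [invYX] at hz
    have ht0 : invYX x y t = 0 := Nat.eq_zero_of_add_eq_zero_left hz
    have hite : (if z = y then t.count x else 0) = 0 := Nat.eq_zero_of_add_eq_zero_right hz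
    have ht := ih (fun w hw => hmem w (List.mem_cons_of_mem _ hw)) ht0
    rcases hmem z (List.mem_cons_self) with hzx | hzy
    · have e1 : (z :: t).count x = t.count x + 1 := by
        rw [hzx]; exact List.count_cons_self
      have e2 : (z :: t).count y = t.count y := by
        rw [hzx]; exact List.count_cons_of_ne hxy
      rw [e1, e2, List.replicate_succ, List.cons_append, hzx]
      exact congrArg _ ht
    · have hcx : t.count x = 0 := by
        rw [hzy] at hite; simpa using hite
      have e1 : (z :: t).count x = 0 := by
        rw [hzy, List.count_cons_of_ne hxy.symm]; exact hcx
      have e2 : (z :: t).count y = t.count y + 1 := by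
        rw [hzy]; exact List.count_cons_self
      rw [e1, e2, List.replicate_zero, List.nil_append, List.replicate_succ, hzy]
      have : t = List.replicate (t.count y) y := by
        rw [ht, hcx]; simp
      exact congrArg _ this

lemma invYX_pos {x y : I} (hxy : x ≠ y) :
    ∀ τ : List I, (∀ z ∈ τ, z = x ∨ z = y) → invYX x y τ ≠ 0 →
      ∃ u v : List I, τ = u ++ y :: x :: v := by
  intro τ
  induction τ with
  | nil => simp [invYX]
  | cons z t ih =>
    intro hmem hz
    by_cases ht : invYX x y t = 0
    · simp only [invYX, ht, add_zero] at hz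
      have hzy : z = y := by
        by_contra h; simp [h] at hz
      rw [hzy, if_pos rfl] at hz
      have ht' := invYX_zero hxy t (fun w hw => hmem w (List.mem_cons_of_mem _ hw)) ht
      obtain ⟨c, hc⟩ : ∃ c, t.count x = c + 1 := ⟨t.count x - 1, by omega⟩
      rw [hc] at ht'
      generalize t.count y = b at ht'
      refine ⟨[], List.replicate c x ++ List.replicate b y, ?_⟩
      rw [hzy, ht', List.replicate_succ]
      rfl
    · obtain ⟨u, v, huv⟩ := ih (fun w hw => hmem w (List.mem_cons_of_mem _ hw)) ht
      exact ⟨z :: u, v, by rw [huv]; rfl⟩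

lemma invYX_swap {x y : I} (hxy : x ≠ y) :
    ∀ u v : List I, invYX x y (u ++ y :: x :: v) = invYX x y (u ++ x :: y :: v) + 1 := by
  intro u
  induction u with
  | nil =>
    intro v
    simp [invYX, List.count_cons, hxy, hxy.symm]
    omega
  | cons z u ih =>
    intro v
    rw [List.cons_append, List.cons_append]
    simp only [invYX]
    have hcnt : (u ++ y :: x :: v).count x = (u ++ x :: y :: v).count x := by
      simp [List.count_append, List.count_cons]
      try omega
    rw [hcnt, ih v]
    exact (Nat.add_assoc _ _ 1).symm

end AgileAux

namespace AgileAux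
variable {I : Type} [DecidableEq I]

lemma before_total {L : List I} (hL : L.Nodup) {x y : I} (hx : x ∈ L) (hy : y ∈ L)
    (hxy : x ≠ y) : Before y x L ↔ ¬ Before x y L := by
  have hne : L.idxOf x ≠ L.idxOf y := fun h => hxy ((List.idxOf_inj hx).mp h)
  unfold Before
  omega

lemma before_swap {S : List I → List I} {L0 : List I} (hperm : ∀ σ, (S σ).Perm L0)
    (hnodup : L0.Nodup) {x y : I} (hx : x ∈ L0) (hy : y ∈ L0) (hxy : x ≠ y) (τ : List I) :
    Before y x (S τ) ↔ ¬ Before x y (S τ) :=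
  before_total (((hperm τ).nodup_iff).mpr hnodup) ((hperm τ).mem_iff.mpr hx)
    ((hperm τ).mem_iff.mpr hy) hxy

lemma mem_of_not_iff {S : List I → List I} {L0 : List I} (hperm : ∀ σ, (S σ).Perm L0)
    {x y : I} {σ1 σ2 : List I}
    (h : ¬ (Before x y (S σ1) ↔ Before x y (S σ2))) : x ∈ L0 ∧ y ∈ L0 := by
  constructor
  · by_contra hx
    apply h
    have e1 : (S σ1).idxOf x = (S σ1).length :=
      List.idxOf_eq_length_iff.mpr (fun hm => hx ((hperm σ1).mem_iff.mp hm))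
    have e2 : (S σ2).idxOf x = (S σ2).length :=
      List.idxOf_eq_length_iff.mpr (fun hm => hx ((hperm σ2).mem_iff.mp hm))
    have l1 : (S σ1).idxOf y ≤ (S σ1).length := List.idxOf_le_length
    have l2 : (S σ2).idxOf y ≤ (S σ2).length := List.idxOf_le_length
    unfold Before
    omega
  · by_contra hy
    apply h
    have e1 : (S σ1).idxOf y = (S σ1).length :=
      List.idxOf_eq_length_iff.mpr (fun hm => hy ((hperm σ1).mem_iff.mp hm))
    have e2 : (S σ2).idxOf y = (S σ2).length :=
      List.idxOf_eq_length_iff.mpr (fun hm => hy ((hperm σ2).mem_iff.mp hm))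
    by_cases hx : x ∈ L0
    · have l1 : (S σ1).idxOf x < (S σ1).length :=
        List.idxOf_lt_length_iff.mpr ((hperm σ1).mem_iff.mpr hx)
      have l2 : (S σ2).idxOf x < (S σ2).length :=
        List.idxOf_lt_length_iff.mpr ((hperm σ2).mem_iff.mpr hx)
      unfold Before; omega
    · have l1 : (S σ1).idxOf x = (S σ1).length :=
        List.idxOf_eq_length_iff.mpr (fun hm => hx ((hperm σ1).mem_iff.mp hm))
      have l2 : (S σ2).idxOf x = (S σ2).length :=
        List.idxOf_eq_length_iff.mpr (fun hm => hx ((hperm σ2).mem_iff.mp hm))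
      unfold Before; omega

/-- Key consequence of `|R(x^i)| = |R(y^j)| = 1`: a transposition of adjacent requests
to `x` and `y` that is not of the designated pair does not change the state order. -/
lemma stepS {S : List I → List I} {L0 : List I} (hperm : ∀ σ, (S σ).Perm L0)
    (hnodup : L0.Nodup) {x y : I} (hxy : x ≠ y) (hx : x ∈ L0) (hy : y ∈ L0)
    {i j q l : ℕ}
    (hRx : ∀ q', InR S x i q' → q' = q) (hRy : ∀ l', InR S y j l' → l' = l)
    (u v : List I) (hci : (u ++ x :: y :: v).count x = i)
    (hcj : (u ++ x :: y :: v).count y = j)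
    (hnd : ¬ (u.count x + 1 = q ∧ u.count y + 1 = l)) :
    (Before x y (S (u ++ x :: y :: v)) ↔ Before x y (S (u ++ y :: x :: v))) := by
  by_contra h
  set σ := u ++ x :: y :: v with hσ
  have hswap : SwapAt σ u.length = u ++ y :: x :: v := swapAt_decomp u v x y
  have hga : σ[u.length]? = some x := get_fst u (y :: v) x
  have hgb : σ[u.length + 1]? = some y := get_snd u v x y
  have h' : ¬ (Before x y (S σ) ↔ Before x y (S (SwapAt σ u.length))) := by
    rw [hswap]; exact h
  have agile : AgilePairAt S σ u.length x y := ⟨Or.inl ⟨hga, hgb⟩, h'⟩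
  have ht1 : (σ.take (u.length + 1)).count x = u.count x + 1 := by
    rw [hσ, show u ++ x :: y :: v = u ++ x :: (y :: v) from rfl, take_add_one]
    simp [List.count_append]
  have ht2 : (σ.take (u.length + 2)).count y = u.count y + 1 := by
    rw [hσ, take_add_two]
    simp [List.count_append, List.count_cons, hxy, hxy.symm]
  have hq' : u.count x + 1 = q :=
    hRx _ ⟨σ, y, u.length, hci, hxy.symm, agile, Or.inl ⟨hga, ht1⟩⟩
  have agile' : AgilePairAt S σ u.length y x := by
    refine ⟨Or.inr ⟨hga, hgb⟩, ?_⟩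
    rw [before_swap hperm hnodup hx hy hxy, before_swap hperm hnodup hx hy hxy]
    tauto
  have hl' : u.count y + 1 = l :=
    hRy _ ⟨σ, x, u.length, hcj, hxy, agile', Or.inr ⟨hgb, ht2⟩⟩
  exact hnd ⟨hq', hl'⟩

lemma inPerm_perm {τ τ' : List I} (h : τ.Perm τ') {x y : I} {i j : ℕ} :
    InPerm x y i j τ → InPerm x y i j τ' := fun ⟨a, b, c⟩ =>
  ⟨(h.count_eq x).symm.trans a, (h.count_eq y).symm.trans b,
   fun z hz => c z (h.mem_iff.mpr hz)⟩

lemma phase1 {S : List I → List I} {L0 : List I} (hperm : ∀ σ, (S σ).Perm L0)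
    (hnodup : L0.Nodup) {x y : I} (hxy : x ≠ y) (hx : x ∈ L0) (hy : y ∈ L0)
    {i j q l : ℕ}
    (hRx : ∀ q', InR S x i q' → q' = q) (hRy : ∀ l', InR S y j l' → l' = l) :
    ∀ τ, InPerm x y i j τ → Ox x y q l τ →
      (Before x y (S τ) ↔ Before x y (S (List.replicate i x ++ List.replicate j y))) := by
  suffices H : ∀ N τ, invYX x y τ = N → InPerm x y i j τ → Ox x y q l τ →
      (Before x y (S τ) ↔ Before x y (S (List.replicate i x ++ List.replicate j y))) from
    fun τ h1 h2 => H _ τ rfl h1 h2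
  intro N
  induction N using Nat.strong_induction_on with
  | _ N ih =>
    intro τ hN hip hox
    rcases Nat.eq_zero_or_pos N with rfl | hpos
    · obtain ⟨hcx, hcy, hmem⟩ := hip
      have hτ : τ = List.replicate i x ++ List.replicate j y := by
        rw [← hcx, ← hcy]; exact invYX_zero hxy τ hmem hN
      rw [hτ]
    · obtain ⟨u, v, rfl⟩ := invYX_pos hxy τ hip.2.2 (by omega)
      have hpm : (u ++ x :: y :: v).Perm (u ++ y :: x :: v) :=
        List.Perm.append_left u (List.Perm.swap y x v)
      have hip' : InPerm x y i j (u ++ x :: y :: v) := inPerm_perm hpm.symm hip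
      by_cases hd : u.count x + 1 = q ∧ u.count y + 1 = l
      · exact absurd hox (not_ox_desig hxy v hd.1 hd.2)
      · have hstep := stepS hperm hnodup hxy hx hy hRx hRy u v hip'.1 hip'.2.1 hd
        have hN' : invYX x y (u ++ x :: y :: v) = N - 1 := by
          have := invYX_swap hxy u v; omega
        exact hstep.symm.trans
          (ih (N - 1) (by omega) _ hN' hip' (ox_mono hxy u v hox))

lemma phase2 {S : List I → List I} {L0 : List I} (hperm : ∀ σ, (S σ).Perm L0)
    (hnodup : L0.Nodup) {x y : I} (hxy : x ≠ y) (hx : x ∈ L0) (hy : y ∈ L0)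
    {i j q l : ℕ}
    (hRx : ∀ q', InR S x i q' → q' = q) (hRy : ∀ l', InR S y j l' → l' = l) :
    ∀ τ, InPerm x y i j τ → ¬ Ox x y q l τ →
      (Before x y (S τ) ↔ Before x y (S (List.replicate j y ++ List.replicate i x))) := by
  suffices H : ∀ N τ, invYX y x τ = N → InPerm x y i j τ → ¬ Ox x y q l τ →
      (Before x y (S τ) ↔ Before x y (S (List.replicate j y ++ List.replicate i x))) from
    fun τ h1 h2 => H _ τ rfl h1 h2
  intro N
  induction N using Nat.strong_induction_on with
  | _ N ih =>
    intro τ hN hip hox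
    rcases Nat.eq_zero_or_pos N with rfl | hpos
    · obtain ⟨hcx, hcy, hmem⟩ := hip
      have hτ : τ = List.replicate j y ++ List.replicate i x := by
        rw [← hcx, ← hcy]
        exact invYX_zero hxy.symm τ (fun z hz => (hmem z hz).symm) hN
      rw [hτ]
    · obtain ⟨u, v, rfl⟩ := invYX_pos hxy.symm τ (fun z hz => (hip.2.2 z hz).symm) (by omega)
      have hpm : (u ++ x :: y :: v).Perm (u ++ y :: x :: v) :=
        List.Perm.append_left u (List.Perm.swap y x v)
      have hip' : InPerm x y i j (u ++ y :: x :: v) := inPerm_perm hpm hip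
      by_cases hd : u.count x + 1 = q ∧ u.count y + 1 = l
      · exact absurd (ox_desig hxy v hd.1 hd.2) hox
      · have hstep := stepS hperm hnodup hxy hx hy hRx hRy u v hip.1 hip.2.1 hd
        have hN' : invYX y x (u ++ y :: x :: v) = N - 1 := by
          have := invYX_swap hxy.symm u v; omega
        have hox' : ¬ Ox x y q l (u ++ y :: x :: v) := fun h => hox (ox_mono hxy u v h)
        exact hstep.trans (ih (N - 1) (by omega) _ hN' hip' hox')

lemma pair_decomp {σ : List I} {p : ℕ} {x y : I} {q l : ℕ} (hxy : x ≠ y)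
    (h : PairAtPos σ p x q y l) :
    ∃ u v : List I, (σ = u ++ x :: y :: v ∨ σ = u ++ y :: x :: v) ∧ u.length = p ∧
      u.count x + 1 = q ∧ u.count y + 1 = l := by
  rcases h with ⟨hga, hgb, hc1, hc2⟩ | ⟨hga, hgb, hc1, hc2⟩
  · obtain ⟨u, v, hdec, hlen⟩ := decomp_of_get? hga hgb
    subst hlen
    rw [hdec] at hc1 hc2
    rw [show u ++ x :: y :: v = u ++ x :: (y :: v) from rfl, take_add_one] at hc1
    rw [take_add_two] at hc2
    simp [List.count_append, List.count_cons, hxy, hxy.symm] at hc1 hc2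
    exact ⟨u, v, Or.inl hdec, rfl, by omega, by omega⟩
  · obtain ⟨u, v, hdec, hlen⟩ := decomp_of_get? hga hgb
    subst hlen
    rw [hdec] at hc1 hc2
    rw [show u ++ y :: x :: v = u ++ y :: (x :: v) from rfl, take_add_one] at hc1
    rw [take_add_two] at hc2
    simp [List.count_append, List.count_cons, hxy, hxy.symm] at hc1 hc2
    exact ⟨u, v, Or.inr hdec, rfl, by omega, by omega⟩

end AgileAux

/-- Let `x_(q)`, `y_(l)` be an agile pair in some `λ ∈ perm(x^i y^j)`
and suppose `|R(x^i)| = |R(y^j)| = 1`. Then in every `σ ∈ perm(x^i y^j)` in which the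
`q`-th request to `x` and the `l`-th request to `y` are adjacent, transposing them
changes the relative order of `x` and `y` in `S(σ)`. -/
theorem agile_swap_always_changes
    {I : Type} [DecidableEq I] (S : List I → List I) (L0 : List I)
    (hperm : ∀ σ, (S σ).Perm L0) (hnodup : L0.Nodup)
    (hproj : Projective S)
    (x y : I) (hxy : x ≠ y) (i j q l : ℕ)
    (lam : List I) (p : ℕ)
    (hlam : InPerm x y i j lam)
    (hpos : PairAtPos lam p x q y l)
    (hlamagile : AgilePairAt S lam p x y)
    (hRx : ∀ q' : ℕ, InR S x i q' → q' = q)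
    (hRy : ∀ l' : ℕ, InR S y j l' → l' = l) :
    ∀ (σ : List I) (p' : ℕ), InPerm x y i j σ → PairAtPos σ p' x q y l →
      ¬ (Before x y (S σ) ↔ Before x y (S (SwapAt σ p'))) := by
  classical
  obtain ⟨hxL, hyL⟩ := AgileAux.mem_of_not_iff hperm hlamagile.2
  obtain ⟨u, v, hor, hlen, hq, hl⟩ := AgileAux.pair_decomp hxy hpos
  -- the states of the two canonical sequences x^i y^j and y^j x^i order x,y differently
  have hXY : ¬ (Before x y (S (List.replicate i x ++ List.replicate j y)) ↔
      Before x y (S (List.replicate j y ++ List.replicate i x))) := by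
    have hna := hlamagile.2
    rcases hor with rfl | rfl
    · rw [← hlen, AgileAux.swapAt_decomp u v x y] at hna
      have h1 := AgileAux.phase1 hperm hnodup hxy hxL hyL hRx hRy _ hlam
        (AgileAux.ox_desig hxy v hq hl)
      have hip' : InPerm x y i j (u ++ y :: x :: v) :=
        AgileAux.inPerm_perm (List.Perm.append_left u (List.Perm.swap y x v)) hlam
      have h2 := AgileAux.phase2 hperm hnodup hxy hxL hyL hRx hRy _ hip'
        (AgileAux.not_ox_desig hxy v hq hl)
      tauto
    · rw [← hlen, AgileAux.swapAt_decomp u v y x] at hna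
      have h2 := AgileAux.phase2 hperm hnodup hxy hxL hyL hRx hRy _ hlam
        (AgileAux.not_ox_desig hxy v hq hl)
      have hip' : InPerm x y i j (u ++ x :: y :: v) :=
        AgileAux.inPerm_perm (List.Perm.append_left u (List.Perm.swap x y v)) hlam
      have h1 := AgileAux.phase1 hperm hnodup hxy hxL hyL hRx hRy _ hip'
        (AgileAux.ox_desig hxy v hq hl)
      tauto
  intro σ p' hip hpp
  obtain ⟨u', v', hor', hlen', hq', hl'⟩ := AgileAux.pair_decomp hxy hpp
  rcases hor' with rfl | rfl
  · rw [← hlen', AgileAux.swapAt_decomp u' v' x y]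
    have h1 := AgileAux.phase1 hperm hnodup hxy hxL hyL hRx hRy _ hip
      (AgileAux.ox_desig hxy v' hq' hl')
    have hip' : InPerm x y i j (u' ++ y :: x :: v') :=
      AgileAux.inPerm_perm (List.Perm.append_left u' (List.Perm.swap y x v')) hip
    have h2 := AgileAux.phase2 hperm hnodup hxy hxL hyL hRx hRy _ hip'
      (AgileAux.not_ox_desig hxy v' hq' hl')
    tauto
  · rw [← hlen', AgileAux.swapAt_decomp u' v' y x]
    have h2 := AgileAux.phase2 hperm hnodup hxy hxL hyL hRx hRy _ hip
      (AgileAux.not_ox_desig hxy v' hq' hl')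
    have hip' : InPerm x y i j (u' ++ x :: y :: v') :=
      AgileAux.inPerm_perm (List.Perm.append_left u' (List.Perm.swap x y v')) hip
    have h1 := AgileAux.phase1 hperm hnodup hxy hxL hyL hRx hRy _ hip'
      (AgileAux.ox_desig hxy v' hq' hl')
    tauto
end

section
/- In the directed graph G on unary projections with an arc (x^i, y^j) whenever some σ ∈ perm(x^i y^j) satisfies S_{xy}(σ)=[xy], for a projective algorithm on at least three items the arc relation is transitive across distinct items: if (x^i,y^j) ∈ E and (y^j,z^k) ∈ E with x,y,z pairwise distinct, then (x^i,z^k) ∈ E. -/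
/-- Arc `(x^i, y^j)` of the graph `G` on unary projections: some `σ ∈ perm(x^i y^j)`
has `S_{xy}(σ) = [xy]`. -/
def ArcE {I : Type} [DecidableEq I] (S : List I → List I)
    (x : I) (i : ℕ) (y : I) (j : ℕ) : Prop :=
  ∃ σ : List I, InPerm x y i j σ ∧ Before x y (S σ)

/-- Edge relation of `G` on unary projections, viewed as pairs (item, multiplicity). -/
def Edge {I : Type} [DecidableEq I] (S : List I → List I) (a b : I × ℕ) : Prop :=
  a.1 ≠ b.1 ∧ ArcE S a.1 a.2 b.1 b.2

lemma first_split {I : Type} [DecidableEq I] (y : I) (s : List I) (h : y ∈ s) :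
    ∃ a b, s = a ++ y :: b ∧ y ∉ a := by
  induction s with
  | nil => cases h
  | cons c s ih =>
    by_cases hc : c = y
    · exact ⟨[], s, by simp [hc], by simp⟩
    · have h' : y ∈ s := by
        rcases List.mem_cons.mp h with h1 | h1
        · exact absurd h1.symm hc
        · exact h1
      obtain ⟨a, b, rfl, ha⟩ := ih h'
      refine ⟨c :: a, b, rfl, ?_⟩
      simp only [List.mem_cons, not_or]
      exact ⟨fun e => hc e.symm, ha⟩

lemma mix_exists {I : Type} [DecidableEq I] (x y z : I)
    (hxy : x ≠ y) (hxz : x ≠ z) (hyz : y ≠ z) :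
    ∀ (t s : List I), (∀ w ∈ s, w = x ∨ w = y) → (∀ w ∈ t, w = y ∨ w = z) →
      s.count y = t.count y →
      ∃ σ : List I, proj2 x y σ = s ∧ proj2 y z σ = t ∧
        σ.count x = s.count x ∧ σ.count z = t.count z := by
  intro t
  induction t with
  | nil =>
    intro s hs _ hcount
    have hy : y ∉ s := by
      simpa using List.count_eq_zero.mp (by simpa using hcount)
    have hx : ∀ w ∈ s, w = x := by
      intro w hw
      rcases hs w hw with h | h
      · exact h
      · exact absurd (h ▸ hw) hy
    refine ⟨s, ?_, ?_, rfl, ?_⟩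
    · exact List.filter_eq_self.mpr (fun a ha => by simp [hx a ha])
    · refine List.filter_eq_nil_iff.mpr (fun a ha => ?_)
      simp [hx a ha, hxy, hxz]
    · have hz : z ∉ s := fun hz => hxz (hx z hz).symm
      simp [List.count_eq_zero.mpr hz]
  | cons c t ih =>
    intro s hs ht hcount
    have ht' : ∀ w ∈ t, w = y ∨ w = z := fun w hw => ht w (List.mem_cons_of_mem _ hw)
    rcases ht c List.mem_cons_self with h | h
    · -- c = y : split s at its first y
      have h' := h.symm; subst h'
      have hy : y ∈ s := by
        apply List.count_pos_iff.mp
        rw [hcount]; simp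
      obtain ⟨a, b, rfl, ha⟩ := first_split y s hy
      have hax : ∀ w ∈ a, w = x := by
        intro w hw
        rcases hs w (by simp [hw]) with h1 | h1
        · exact h1
        · exact absurd (h1 ▸ hw) ha
      have hcb : b.count y = t.count y := by
        rw [List.count_append, List.count_eq_zero.mpr ha] at hcount
        simp [List.count_cons] at hcount
        omega
      obtain ⟨σ, hp1, hp2, hc1, hc2⟩ := ih b
        (fun w hw => hs w (by simp [hw])) ht' hcb
      have hza : z ∉ a := fun hza => hxz (hax z hza).symm
      refine ⟨a ++ y :: σ, ?_, ?_, ?_, ?_⟩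
      · rw [proj2] at hp1 ⊢
        rw [List.filter_append, List.filter_eq_self.mpr (fun w hw => by simp [hax w hw]),
          List.filter_cons, if_pos (by simp), hp1]
      · rw [proj2] at hp2 ⊢
        rw [List.filter_append,
          List.filter_eq_nil_iff.mpr (fun w hw => by simp [hax w hw, hxy, hxz]),
          List.filter_cons, if_pos (by simp), hp2, List.nil_append]
      · simp [List.count_append, List.count_cons, hc1, hxy]
      · simp [List.count_append, List.count_cons, hc2, List.count_eq_zero.mpr hza,
          Ne.symm hyz]
    · -- c = z
      have h' := h.symm; subst h'
      have hc : s.count y = t.count y := by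
        simpa [List.count_cons, Ne.symm hyz] using hcount
      obtain ⟨σ, hp1, hp2, hc1, hc2⟩ := ih s hs ht' hc
      refine ⟨z :: σ, ?_, ?_, ?_, ?_⟩
      · rw [proj2] at hp1 ⊢
        rw [List.filter_cons, if_neg (by simp [Ne.symm hxz, Ne.symm hyz]), hp1]
      · rw [proj2] at hp2 ⊢
        rw [List.filter_cons, if_pos (by simp), hp2]
      · simpa [List.count_cons, hxz, Ne.symm hxz] using hc1
      · simp [List.count_cons, hc2]

/-- For a projective algorithm on at least three items, the arc
relation of `G` is transitive across distinct items:
`(x^i,y^j) ∈ E` and `(y^j,z^k) ∈ E` imply `(x^i,z^k) ∈ E`. -/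
theorem arc_transitive
    {I : Type} [DecidableEq I] (S : List I → List I) (L0 : List I)
    (hperm : ∀ σ, (S σ).Perm L0) (hnodup : L0.Nodup)
    (hproj : Projective S)
    (x y z : I) (hxy : x ≠ y) (hxz : x ≠ z) (hyz : y ≠ z)
    (i j k : ℕ)
    (h1 : ArcE S x i y j) (h2 : ArcE S y j z k) :
    ArcE S x i z k := by
  obtain ⟨σ₁, ⟨hc1x, hc1y, hm1⟩, hb1⟩ := h1
  obtain ⟨σ₂, ⟨hc2y, hc2z, hm2⟩, hb2⟩ := h2
  obtain ⟨σ, hp1, hp2, hcx, hcz⟩ := mix_exists x y z hxy hxz hyz σ₂ σ₁ hm1 hm2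
    (by rw [hc1y, hc2y])
  have hbxy : Before x y (S σ) := by
    rw [hproj x y σ, hp1]; exact hb1
  have hbyz : Before y z (S σ) := by
    rw [hproj y z σ, hp2]; exact hb2
  have hbxz : Before x z (S σ) := Nat.lt_trans hbxy hbyz
  refine ⟨proj2 x z σ, ⟨?_, ?_, ?_⟩, ?_⟩
  · rw [proj2, List.count_filter (by simp), hcx, hc1x]
  · rw [proj2, List.count_filter (by simp), hcz, hc2z]
  · intro w hw
    simpa using List.of_mem_filter hw
  · exact (hproj x z σ).mp hbxz
end

section
/- The algorithm FREQUENCY COUNT, which keeps items sorted by decreasing number of past requests (breaking ties by recency of last request), is not M-regular for any M: after serving x^{M+1} y^M from any initial list, item x is in front of y. -/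
/-- FREQUENCY COUNT: the list is kept sorted by decreasing number of past requests;
items with equal counts are ordered by recency of their last request (the initial
order, kept by the stable sort, breaks remaining ties). -/
def fcState {I : Type} [DecidableEq I] (L0 σ : List I) : List I :=
  List.insertionSort
    (fun u v => σ.count v < σ.count u ∨
      (σ.count u = σ.count v ∧ σ.reverse.idxOf u ≤ σ.reverse.idxOf v)) L0

private lemma fc_before {I : Type} [DecidableEq I] (L0 σ : List I)
    (x y : I) (hx : x ∈ L0) (hy : y ∈ L0) (hxy : x ≠ y)
    (hc : σ.count y < σ.count x) :
    Before x y (fcState L0 σ) := by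
  set r : I → I → Prop := (fun u v => σ.count v < σ.count u ∨
      (σ.count u = σ.count v ∧ σ.reverse.idxOf u ≤ σ.reverse.idxOf v)) with hr
  haveI : IsTotal I r := ⟨by
    intro a b
    rcases lt_trichotomy (σ.count a) (σ.count b) with h | h | h
    · exact Or.inr (Or.inl h)
    · rcases le_total (σ.reverse.idxOf a) (σ.reverse.idxOf b) with h' | h'
      · exact Or.inl (Or.inr ⟨h, h'⟩)
      · exact Or.inr (Or.inr ⟨h.symm, h'⟩)
    · exact Or.inl (Or.inl h)⟩
  haveI : IsTrans I r := ⟨by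
    intro a b c hab hbc
    rcases hab with h1 | ⟨h1, h1'⟩ <;> rcases hbc with h2 | ⟨h2, h2'⟩
    · exact Or.inl (h2.trans h1)
    · exact Or.inl (h2 ▸ h1)
    · exact Or.inl (h1 ▸ h2)
    · exact Or.inr ⟨h1.trans h2, h1'.trans h2'⟩⟩
  have hsorted : (List.insertionSort r L0).Pairwise r := List.pairwise_insertionSort r L0
  have hperm : List.Perm (List.insertionSort r L0) L0 := L0.perm_insertionSort r
  have hx' : x ∈ List.insertionSort r L0 := hperm.mem_iff.mpr hx
  have hy' : y ∈ List.insertionSort r L0 := hperm.mem_iff.mpr hy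
  set L := List.insertionSort r L0 with hL
  have hxl : L.idxOf x < L.length := List.idxOf_lt_length_iff.mpr hx'
  have hyl : L.idxOf y < L.length := List.idxOf_lt_length_iff.mpr hy'
  have hne : L.idxOf x ≠ L.idxOf y := fun h =>
    hxy ((List.idxOf_inj hx').mp h)
  rcases lt_or_gt_of_ne hne with h | h
  · exact h
  · exfalso
    have := hsorted.rel_get_of_lt
      (show (⟨L.idxOf y, hyl⟩ : Fin L.length) < ⟨L.idxOf x, hxl⟩ from h)
    rw [List.idxOf_get hxl, List.idxOf_get hyl] at this
    rcases this with h' | ⟨h', _⟩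
    · omega
    · omega

/-- FREQUENCY COUNT is not `M`-regular for any `M`: after serving
`x^{M+1} y^M` from any initial list, item `x` is still in front of `y`; in particular
it is not the case that after every sequence `σ z^M` the item `z` is at the front. -/
theorem frequencyCount_not_M_regular
    {I : Type} [DecidableEq I] (L0 : List I) (hnodup : L0.Nodup)
    (x y : I) (hx : x ∈ L0) (hy : y ∈ L0) (hxy : x ≠ y)
    (M : ℕ) (hM : 1 ≤ M) :
    Before x y (fcState L0 (List.replicate (M + 1) x ++ List.replicate M y)) ∧
    ¬ (∀ (σ : List I) (z : I), z ∈ L0 →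
        (fcState L0 (σ ++ List.replicate M z)).head? = some z) := by
  have hc : (List.replicate (M + 1) x ++ List.replicate M y).count y <
      (List.replicate (M + 1) x ++ List.replicate M y).count x := by
    simp [List.count_append, List.count_replicate, hxy, Ne.symm hxy]
  have hbefore := fc_before L0 _ x y hx hy hxy hc
  refine ⟨hbefore, ?_⟩
  intro hall
  have := hall (List.replicate (M + 1) x) y hy
  rw [List.head?_eq_some_iff] at this
  · rcases this with ⟨l, hl⟩
    have : (fcState L0 (List.replicate (M + 1) x ++ List.replicate M y)).idxOf y = 0 := by
      rw [hl]; simp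
    unfold Before at hbefore
    omega
end

section
/- Let A be a deterministic projective M-regular algorithm on a list of at least three items. Then there is a function F on unary projections with 1 ≤ F(x^i) ≤ i for i ≥ M such that for any two items x,y and any request sequence σ with at least M requests to x and at least M requests to y, x is in front of y in S(σ) if and only if the F(σ_x)-th request to x occurs after the F(σ_y)-th request to y in σ. -/
/-- `M`-regularity: after `σ x^M`, item `x` is in front of all other items. -/
def MRegular {I : Type} [DecidableEq I] (M : ℕ) (S : List I → List I) : Prop :=
  ∀ (σ : List I) (x : I), (S (σ ++ List.replicate M x)).head? = some x

/-- Position (index in `σ`) of the `q`-th request to `x` (1-based `q`). -/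
def occPos {I : Type} [DecidableEq I] (σ : List I) (x : I) (q : ℕ) : ℕ :=
  ((List.range σ.length).filter (fun m => decide (σ[m]? = some x))).getD (q - 1) 0

namespace CritReq

variable {I : Type} [DecidableEq I]

/-- 0-based index of the (n+1)-st occurrence of `x` in `σ`. -/
def occ : List I → I → ℕ → ℕ
  | [], _, _ => 0
  | a :: s, x, n =>
    if a = x then
      match n with
      | 0 => 0
      | n + 1 => occ s x n + 1
    else occ s x n + 1

@[simp] theorem occ_cons_self_zero (s : List I) (x : I) : occ (x :: s) x 0 = 0 := by
  simp [occ]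

@[simp] theorem occ_cons_self_succ (s : List I) (x : I) (n : ℕ) :
    occ (x :: s) x (n + 1) = occ s x n + 1 := by
  simp [occ]

theorem occ_cons_ne {a x : I} (h : a ≠ x) (s : List I) (n : ℕ) :
    occ (a :: s) x n = occ s x n + 1 := by
  simp [occ, h]

theorem occ_get? {σ : List I} {x : I} {n : ℕ} (h : n < σ.count x) :
    σ[occ σ x n]? = some x := by
  induction σ generalizing n with
  | nil => simp at h
  | cons a s ih =>
    by_cases hax : a = x
    · subst hax
      cases n with
      | zero => simp
      | succ n =>
        have : n < s.count a := by simpa [List.count_cons] using h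
        simpa using ih this
    · have : n < s.count x := by simpa [List.count_cons, hax] using h
      simpa [occ_cons_ne hax] using ih this

theorem occ_mono {σ : List I} {x : I} {n : ℕ} (h : n + 1 < σ.count x) :
    occ σ x n < occ σ x (n + 1) := by
  induction σ generalizing n with
  | nil => simp at h
  | cons a s ih =>
    by_cases hax : a = x
    · subst hax
      cases n with
      | zero =>
        simp only [occ_cons_self_zero, occ_cons_self_succ]
        omega
      | succ n =>
        have hn : n + 1 < s.count a := by simpa [List.count_cons] using h
        have := ih hn
        simp only [occ_cons_self_succ]
        omega
    · have hn : n + 1 < s.count x := by simpa [List.count_cons, hax] using h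
      have := ih hn
      simp only [occ_cons_ne hax]
      omega

theorem occ_lt_iff_count {σ : List I} {x : I} {n : ℕ} (h : n < σ.count x) (m : ℕ) :
    occ σ x n < m ↔ n + 1 ≤ (σ.take m).count x := by
  induction σ generalizing n m with
  | nil => simp at h
  | cons a s ih =>
    cases m with
    | zero => simp
    | succ m =>
      by_cases hax : a = x
      · subst hax
        cases n with
        | zero => simp [List.count_cons]
        | succ n =>
          have hn : n < s.count a := by simpa [List.count_cons] using h
          have := ih hn m
          simp only [occ_cons_self_succ, List.take_succ_cons, List.count_cons, beq_self_eq_true,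
            if_pos]
          omega
      · have hn : n < s.count x := by simpa [List.count_cons, hax] using h
        have := ih hn m
        have hax' : (a == x) = false := by simpa using hax
        simp only [occ_cons_ne hax, List.take_succ_cons, List.count_cons, hax',
          Bool.false_eq_true, if_false]
        omega

theorem count_take_occ {σ : List I} {x : I} {n : ℕ} (h : n < σ.count x) :
    (σ.take (occ σ x n + 1)).count x = n + 1 := by
  have h1 : n + 1 ≤ (σ.take (occ σ x n + 1)).count x :=
    (occ_lt_iff_count h _).mp (Nat.lt_succ_self _)
  have h2 : (σ.take (occ σ x n + 1)).count x ≤ n + 1 := by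
    by_contra hc
    push_neg at hc
    rcases Nat.lt_or_ge (n + 1) (σ.count x) with hlt | hge
    · have h3 := (occ_lt_iff_count hlt (occ σ x n + 1)).mpr (by omega)
      have h4 := occ_mono hlt
      omega
    · have : (σ.take (occ σ x n + 1)).count x ≤ σ.count x :=
        ((σ.take_sublist _).count_le x)
      omega
  omega

/-- Relative order of occurrences is invariant under filtering that keeps `x` and `y`. -/
theorem occ_filter {p : I → Bool} {x y : I} (hxy : x ≠ y) (hx : p x = true) (hy : p y = true)
    {σ : List I} {k l : ℕ} (hk : k < σ.count x) (hl : l < σ.count y) :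
    (occ σ y l < occ σ x k ↔ occ (σ.filter p) y l < occ (σ.filter p) x k) := by
  induction σ generalizing k l with
  | nil => simp at hk
  | cons a s ih =>
    by_cases hax : a = x
    · subst hax
      have hay : a ≠ y := hxy
      have hfil : (a :: s).filter p = a :: s.filter p := by simp [hx]
      have hcy : l < s.count y := by simpa [List.count_cons, hay] using hl
      cases k with
      | zero =>
        simp [hfil, occ_cons_ne hay]
      | succ k =>
        have hck : k < s.count a := by simpa [List.count_cons] using hk
        have := ih hck hcy
        simp only [hfil, occ_cons_self_succ, occ_cons_ne hay]
        omega
    · by_cases hay : a = y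
      · subst hay
        have hfil : (a :: s).filter p = a :: s.filter p := by simp [hy]
        have hck : k < s.count x := by simpa [List.count_cons, hax] using hk
        cases l with
        | zero =>
          simp [hfil, occ_cons_ne hax]
        | succ l =>
          have hcy : l < s.count a := by simpa [List.count_cons] using hl
          have := ih hck hcy
          simp only [hfil, occ_cons_self_succ, occ_cons_ne hax]
          omega
      · have hck : k < s.count x := by simpa [List.count_cons, hax] using hk
        have hcy : l < s.count y := by simpa [List.count_cons, hay] using hl
        have hih := ih hck hcy
        cases hpa : p a with
        | false =>
          have hfil : (a :: s).filter p = s.filter p := by simp [hpa]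
          simp only [hfil, occ_cons_ne hax, occ_cons_ne hay]
          omega
        | true =>
          have hfil : (a :: s).filter p = a :: s.filter p := by simp [hpa]
          simp only [hfil, occ_cons_ne hax, occ_cons_ne hay]
          omega

def idxs (σ : List I) (x : I) : List ℕ :=
  (List.range σ.length).filter (fun m => decide (σ[m]? = some x))

theorem idxs_cons (a : I) (s : List I) (x : I) :
    idxs (a :: s) x = (if a = x then [0] else []) ++ (idxs s x).map (· + 1) := by
  unfold idxs
  rw [List.length_cons, List.range_succ_eq_map, List.filter_cons]
  simp only [List.getElem?_cons_zero, List.filter_map]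
  have : (List.filter ((fun m => decide ((a :: s)[m]? = some x)) ∘ Nat.succ)
      (List.range s.length)) = (List.range s.length).filter (fun m => decide (s[m]? = some x)) := by
    apply List.filter_congr
    intro m _
    simp
  rw [this]
  by_cases hax : a = x <;> simp [hax, Nat.succ_eq_add_one]

theorem idxs_get? {σ : List I} {x : I} {n : ℕ} (h : n < σ.count x) :
    (idxs σ x)[n]? = some (occ σ x n) := by
  induction σ generalizing n with
  | nil => simp at h
  | cons a s ih =>
    rw [idxs_cons]
    by_cases hax : a = x
    · subst hax
      cases n with
      | zero => simp
      | succ n =>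
        have hn : n < s.count a := by simpa [List.count_cons] using h
        simp [List.getElem?_map, ih hn]
    · have hn : n < s.count x := by simpa [List.count_cons, hax] using h
      simp [hax, occ_cons_ne hax, List.getElem?_map, ih hn]

theorem occPos_eq_occ {σ : List I} {x : I} {q : ℕ} (h1 : 1 ≤ q) (h2 : q ≤ σ.count x) :
    occPos σ x q = occ σ x (q - 1) := by
  have h : q - 1 < σ.count x := by omega
  have hg := idxs_get? (σ := σ) (x := x) h
  unfold occPos
  rw [List.getD_eq_getElem?_getD]
  unfold idxs at hg
  rw [hg]
  rfl

theorem proj2_append (x y : I) (l₁ l₂ : List I) :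
    proj2 x y (l₁ ++ l₂) = proj2 x y l₁ ++ proj2 x y l₂ := by
  simp [proj2]

@[simp] theorem proj2_rep_left (x y : I) (n : ℕ) :
    proj2 x y (List.replicate n x) = List.replicate n x := by
  simp [proj2, List.filter_replicate]

@[simp] theorem proj2_rep_right (x y : I) (n : ℕ) :
    proj2 x y (List.replicate n y) = List.replicate n y := by
  simp [proj2, List.filter_replicate]

theorem proj2_rep_other {x y z : I} (h1 : z ≠ x) (h2 : z ≠ y) (n : ℕ) :
    proj2 x y (List.replicate n z) = [] := by
  simp [proj2, List.filter_replicate, h1, h2]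

theorem proj2_of_subpair {x y z : I} (hyx : y ≠ x) (hyz : y ≠ z) {l : List I}
    (hl : ∀ u ∈ l, u = x ∨ u = y) :
    proj2 x z l = List.replicate (l.count x) x := by
  have : proj2 x z l = l.filter (· == x) := by
    apply List.filter_congr
    intro u hu
    rcases hl u hu with rfl | rfl
    · simp
    · simp [hyx, hyz]
  rw [this, List.filter_beq]

theorem proj2_of_pair {x y : I} {l : List I} (hl : ∀ u ∈ l, u = x ∨ u = y) :
    proj2 x y l = l := by
  apply List.filter_eq_self.mpr
  intro u hu
  rcases hl u hu with rfl | rfl <;> simp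

theorem before_total {x y : I} {L : List I} (hxy : x ≠ y) (hx : x ∈ L) (hy : y ∈ L)
    (h : ¬ Before x y L) : Before y x L := by
  have := (List.idxOf_inj hx).not.mpr hxy
  simp only [Before, not_lt] at h ⊢
  omega

theorem before_asymm {x y : I} {L : List I} (h : Before x y L) (h' : Before y x L) : False := by
  simp only [Before] at h h'
  omega

theorem before_of_head {x y : I} {L : List I} (h : L.head? = some x) (hy : y ≠ x) :
    Before x y L := by
  cases L with
  | nil => simp at h
  | cons a t =>
    simp only [List.head?_cons, Option.some.injEq] at h
    subst h
    simp [Before, List.idxOf_cons_self, List.idxOf_cons_ne _ hy.symm]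

section Alg

variable {S : List I → List I} {L0 : List I} {M : ℕ}

/-- After `σ x^M`, `x` is before any `y ≠ x`. -/
theorem front (hreg : MRegular M S) {x y : I} (hy : y ≠ x) (σ : List I) :
    Before x y (S (σ ++ List.replicate M x)) :=
  before_of_head (hreg σ x) hy

theorem front' (hreg : MRegular M S) {x y : I} (hy : y ≠ x) {m : ℕ} (hm : M ≤ m) (σ : List I) :
    Before x y (S (σ ++ List.replicate m x)) := by
  have : σ ++ List.replicate m x = (σ ++ List.replicate (m - M) x) ++ List.replicate M x := by
    rw [List.append_assoc, ← List.replicate_add]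
    congr 2
    omega
  rw [this]
  exact front hreg hy _

/-- The core three-item exchange lemma. -/
theorem core (huniv : ∀ x : I, x ∈ L0) (hperm : ∀ σ, (S σ).Perm L0)
    (hproj : Projective S) (hreg : MRegular M S)
    {x u v : I} (hxu : x ≠ u) (hxv : x ≠ v) (huv : u ≠ v)
    {m m' : ℕ} (hm' : M ≤ m') (a d c : ℕ)
    (h : Before x v (S (List.replicate (a + d) x ++ List.replicate m' v ++ List.replicate c x))) :
    Before x u (S (List.replicate a x ++ List.replicate m u ++ List.replicate (d + c) x)) := by
  set ρ := List.replicate a x ++ List.replicate m u ++ List.replicate d x ++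
    List.replicate m' v ++ List.replicate c x with hρ
  have pxv : proj2 x v ρ =
      List.replicate (a + d) x ++ List.replicate m' v ++ List.replicate c x := by
    simp only [hρ, proj2_append, proj2_rep_left, proj2_rep_right,
      proj2_rep_other hxu.symm huv, List.replicate_add, List.append_assoc, List.nil_append]
  have pxu : proj2 x u ρ =
      List.replicate a x ++ List.replicate m u ++ List.replicate (d + c) x := by
    simp only [hρ, proj2_append, proj2_rep_left, proj2_rep_right,
      proj2_rep_other hxv.symm huv.symm, List.replicate_add, List.append_assoc,
      List.append_nil, List.nil_append]
  have pvu : proj2 v u ρ = List.replicate m u ++ List.replicate m' v := by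
    simp only [hρ, proj2_append, proj2_rep_left, proj2_rep_right,
      proj2_rep_other hxv hxu, List.append_nil, List.nil_append]
  have h1 : Before x v (S ρ) := by
    rw [hproj x v ρ, pxv]; exact h
  have h2 : Before v u (S ρ) := by
    rw [hproj v u ρ, pvu]
    exact front' hreg (x := v) (y := u) huv hm' _
  have h3 : Before x u (S ρ) := lt_trans h1 h2
  rw [hproj x u ρ, pxu] at h3
  exact h3

/-- Transfer between block sequences: partner, partner count, and (monotone) position. -/
theorem transfer (huniv : ∀ x : I, x ∈ L0) (hperm : ∀ σ, (S σ).Perm L0)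
    (hproj : Projective S) (hreg : MRegular M S)
    {z₁ z₂ : I} (hz1 : z₁ ≠ z₂)
    {x u v : I} (hxv : x ≠ v) (hxu : x ≠ u) (hz1x : z₁ ≠ x) (hz2x : z₂ ≠ x)
    {m m' : ℕ} (hm : M ≤ m) {a c a' c' : ℕ} (ha : a' ≤ a) (hac : a + c = a' + c')
    (h : Before x v (S (List.replicate a x ++ List.replicate m v ++ List.replicate c x))) :
    Before x u (S (List.replicate a' x ++ List.replicate m' u ++ List.replicate c' x)) := by
  obtain ⟨d, rfl⟩ : ∃ d, a = a' + d := ⟨a - a', by omega⟩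
  have hc' : c' = d + c := by omega
  subst hc'
  by_cases huv : u = v
  · subst huv
    set p := if z₁ = u then z₂ else z₁ with hp
    have hpx : x ≠ p := by
      rw [hp]; split <;> [exact hz2x.symm; exact hz1x.symm]
    have hpu : p ≠ u := by
      rw [hp]; split
      · rename_i he; rw [← he]; exact hz1.symm
      · rename_i he; exact he
    have step1 : Before x p
        (S (List.replicate a' x ++ List.replicate M p ++ List.replicate (d + c) x)) :=
      core huniv hperm hproj hreg hpx hxv hpu hm a' d c h
    have step2 := core huniv hperm hproj hreg hxu hpx hpu.symm (le_refl M) a' 0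
      (d + c) (m := m') (by simpa using step1)
    simpa using step2
  · exact core huniv hperm hproj hreg hxu hxv (Ne.symm (fun he => huv he.symm)) hm a' d c h

end Alg

end CritReq

open CritReq in
/-- A deterministic projective `M`-regular algorithm on a list of at
least three items is governed by critical requests: there is `F` with
`1 ≤ F(x^i) ≤ i` for `i ≥ M` such that whenever `σ` has at least `M` requests to each
of `x` and `y`, item `x` is in front of `y` in `S(σ)` iff the `F(σ_x)`-th request to
`x` occurs after the `F(σ_y)`-th request to `y` in `σ`. -/
theorem Mregular_critical_requests
    {I : Type} [DecidableEq I] (S : List I → List I) (L0 : List I)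
    (hnodup : L0.Nodup) (huniv : ∀ x : I, x ∈ L0)
    (hperm : ∀ σ, (S σ).Perm L0)
    (hthree : ∃ a b c : I, a ≠ b ∧ a ≠ c ∧ b ≠ c)
    (hproj : Projective S) (M : ℕ) (hM : 1 ≤ M) (hreg : MRegular M S) :
    ∃ F : I → ℕ → ℕ,
      (∀ (x : I) (i : ℕ), M ≤ i → 1 ≤ F x i ∧ F x i ≤ i) ∧
      ∀ (x y : I) (σ : List I), x ≠ y →
        M ≤ σ.count x → M ≤ σ.count y →
        (Before x y (S σ) ↔
          occPos σ y (F y (σ.count y)) < occPos σ x (F x (σ.count x))) := by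
  classical
  obtain ⟨A, B, C, hAB, hAC, hBC⟩ := hthree
  have memS : ∀ (σ : List I) (z : I), z ∈ S σ := fun σ z => (hperm σ).mem_iff.mpr (huniv z)
  set w : I → I := fun x => if x = A then B else A with hw
  have hwx : ∀ x, w x ≠ x := by
    intro x
    simp only [hw]
    split
    · next h => subst h; exact hAB.symm
    · next h => exact fun he => h he.symm
  set t : I → I := fun x => if x = A then C else if x = B then C else B with ht
  have htx : ∀ x, t x ≠ x := by
    intro x
    simp only [ht]
    split
    · next h => subst h; exact hAC.symm
    · split
      · next _ h => subst h; exact hBC.symm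
      · next _ h => exact fun he => h he.symm
  have hwt : ∀ x, w x ≠ t x := by
    intro x
    by_cases hxA : x = A
    · simpa [hw, ht, hxA] using hBC
    · by_cases hxB : x = B
      · simpa [hw, ht, hxA, hxB, hAB.symm] using hAC
      · simpa [hw, ht, hxA, hxB] using hAB
  -- the defining predicate for the critical index
  have hQi : ∀ (x : I) (i : ℕ),
      ¬ Before x (w x) (S (List.replicate i x ++ List.replicate M (w x) ++
        List.replicate (i - i) x)) := by
    intro x i hb
    have : Before (w x) x (S (List.replicate i x ++ List.replicate M (w x))) :=
      front hreg (hwx x).symm _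
    rw [Nat.sub_self, List.replicate_zero, List.append_nil] at hb
    exact before_asymm hb this
  have hQex : ∀ (x : I) (i : ℕ), ∃ b, ¬ Before x (w x)
      (S (List.replicate b x ++ List.replicate M (w x) ++ List.replicate (i - b) x)) :=
    fun x i => ⟨i, hQi x i⟩
  set F : I → ℕ → ℕ := fun x i => Nat.find (hQex x i) with hF
  have hFle : ∀ x i, F x i ≤ i := fun x i => Nat.find_le (hQi x i)
  have hF1 : ∀ x i, M ≤ i → 1 ≤ F x i := by
    intro x i hi
    rcases Nat.eq_zero_or_pos (F x i) with h0 | h1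
    · exfalso
      have := Nat.find_eq_zero (hQex x i) |>.mp h0
      apply this
      rw [List.replicate_zero, List.nil_append, Nat.sub_zero]
      exact front' hreg (hwx x) hi _
    · exact h1
  -- the block characterization
  have hblock : ∀ (x v : I), x ≠ v → ∀ (i m a c : ℕ), M ≤ i → M ≤ m → a + c = i →
      (Before x v (S (List.replicate a x ++ List.replicate m v ++ List.replicate c x)) ↔
        a < F x i) := by
    intro x v hxv i m a c hi hm hac
    have hKle : F x i ≤ i := hFle x i
    constructor
    · intro h
      by_contra hk
      push_neg at hk
      have hspec : ¬ Before x (w x) (S (List.replicate (F x i) x ++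
          List.replicate M (w x) ++ List.replicate (i - F x i) x)) :=
        Nat.find_spec (hQex x i)
      exact hspec (transfer huniv hperm hproj hreg (hwt x) hxv (hwx x).symm (hwx x) (htx x)
        hm hk (by omega) h)
    · intro h
      have hmin' := Nat.find_min (hQex x i) h
      have hmin : Before x (w x) (S (List.replicate a x ++
          List.replicate M (w x) ++ List.replicate (i - a) x)) := not_not.mp hmin'
      exact transfer huniv hperm hproj hreg (hwt x) (hwx x).symm hxv (hwx x) (htx x)
        (le_refl M) (le_refl a) (by omega) hmin
  -- a third item for any pair
  have hthird : ∀ x y : I, ∃ z : I, z ≠ x ∧ z ≠ y := by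
    intro x y
    by_cases h1 : A = x
    · by_cases h2 : B = y
      · exact ⟨C, fun he => hAC (h1 ▸ he.symm), fun he => hBC (h2 ▸ he.symm)⟩
      · exact ⟨B, fun he => hAB (h1 ▸ he.symm), h2⟩
    · by_cases h2 : A = y
      · by_cases h3 : B = x
        · exact ⟨C, fun he => hBC (h3 ▸ he.symm), fun he => hAC (h2 ▸ he.symm)⟩
        · exact ⟨B, h3, fun he => hAB (h2 ▸ he.symm)⟩
      · exact ⟨A, h1, h2⟩
  -- main direction on two-letter sequences
  have onecase : ∀ (x y z : I) (τ : List I), x ≠ y → z ≠ x → z ≠ y →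
      (∀ u ∈ τ, u = x ∨ u = y) → M ≤ τ.count x → M ≤ τ.count y →
      occ τ y (F y (τ.count y) - 1) < occ τ x (F x (τ.count x) - 1) →
      Before x y (S τ) := by
    intro x y z τ hxy hzx hzy hτ hix hjy hqp
    have hk1 : 1 ≤ F x (τ.count x) := hF1 _ _ hix
    have hki : F x (τ.count x) ≤ τ.count x := hFle _ _
    have hl1 : 1 ≤ F y (τ.count y) := hF1 _ _ hjy
    have hlj : F y (τ.count y) ≤ τ.count y := hFle _ _
    have hkc : F x (τ.count x) - 1 < τ.count x := by omega
    have hlc : F y (τ.count y) - 1 < τ.count y := by omega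
    set q := occ τ y (F y (τ.count y) - 1) with hqdef
    set n := q + 1 with hn
    set ρ := τ.take n ++ List.replicate M z ++ τ.drop n with hρ
    have htake : ∀ u ∈ τ.take n, u = x ∨ u = y := fun u hu => hτ u (List.mem_of_mem_take hu)
    have hdrop : ∀ u ∈ τ.drop n, u = x ∨ u = y := fun u hu => hτ u (List.mem_of_mem_drop hu)
    have hcx : (τ.take n).count x + (τ.drop n).count x = τ.count x := by
      rw [← List.count_append, List.take_append_drop]
    have hcy : (τ.take n).count y + (τ.drop n).count y = τ.count y := by
      rw [← List.count_append, List.take_append_drop]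
    have hcyl : (τ.take n).count y = F y (τ.count y) := by
      have := count_take_occ (σ := τ) (x := y) hlc
      rw [hn, hqdef]
      omega
    have hcxk : (τ.take n).count x < F x (τ.count x) := by
      by_contra hcon
      push_neg at hcon
      have := (occ_lt_iff_count hkc n).mpr (by omega)
      omega
    have pxz : proj2 x z ρ = List.replicate ((τ.take n).count x) x ++ List.replicate M z ++
        List.replicate ((τ.drop n).count x) x := by
      rw [hρ, proj2_append, proj2_append, proj2_of_subpair hxy.symm hzy.symm htake,
        proj2_of_subpair hxy.symm hzy.symm hdrop, proj2_rep_right]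
    have pyz : proj2 y z ρ = List.replicate ((τ.take n).count y) y ++ List.replicate M z ++
        List.replicate ((τ.drop n).count y) y := by
      rw [hρ, proj2_append, proj2_append,
        proj2_of_subpair hxy hzx.symm (fun u hu => (htake u hu).symm),
        proj2_of_subpair hxy hzx.symm (fun u hu => (hdrop u hu).symm), proj2_rep_right]
    have hXZ : Before x z (S ρ) := by
      rw [hproj x z ρ, pxz]
      exact (hblock x z hzx.symm (τ.count x) M _ _ hix (le_refl M) hcx).mpr hcxk
    have hZY : Before z y (S ρ) := by
      have hnYZ : ¬ Before y z (S ρ) := by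
        rw [hproj y z ρ, pyz]
        intro hcon
        have := (hblock y z hzy.symm (τ.count y) M _ _ hjy (le_refl M) hcy).mp hcon
        omega
      exact before_total hzy.symm (memS ρ y) (memS ρ z) hnYZ
    have hXY : Before x y (S ρ) := lt_trans hXZ hZY
    have pxy : proj2 x y ρ = τ := by
      rw [hρ, proj2_append, proj2_append, proj2_rep_other hzx hzy,
        proj2_of_pair htake, proj2_of_pair hdrop, List.append_nil, List.take_append_drop]
    rw [hproj x y ρ, pxy] at hXY
    exact hXY
  -- the two-letter characterization
  have pair : ∀ (x y : I) (τ : List I), x ≠ y → (∀ u ∈ τ, u = x ∨ u = y) →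
      M ≤ τ.count x → M ≤ τ.count y →
      (Before x y (S τ) ↔
        occ τ y (F y (τ.count y) - 1) < occ τ x (F x (τ.count x) - 1)) := by
    intro x y τ hxy hτ hix hjy
    obtain ⟨z, hzx, hzy⟩ := hthird x y
    have hk1 : 1 ≤ F x (τ.count x) := hF1 _ _ hix
    have hki : F x (τ.count x) ≤ τ.count x := hFle _ _
    have hl1 : 1 ≤ F y (τ.count y) := hF1 _ _ hjy
    have hlj : F y (τ.count y) ≤ τ.count y := hFle _ _
    have hkc : F x (τ.count x) - 1 < τ.count x := by omega
    have hlc : F y (τ.count y) - 1 < τ.count y := by omega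
    have hgp : τ[occ τ x (F x (τ.count x) - 1)]? = some x := occ_get? hkc
    have hgq : τ[occ τ y (F y (τ.count y) - 1)]? = some y := occ_get? hlc
    have hpq : occ τ x (F x (τ.count x) - 1) ≠ occ τ y (F y (τ.count y) - 1) := by
      intro he
      rw [he, hgq] at hgp
      exact hxy (Option.some.injEq _ _ ▸ hgp).symm
    constructor
    · intro h
      rcases Nat.lt_trichotomy (occ τ y (F y (τ.count y) - 1))
        (occ τ x (F x (τ.count x) - 1)) with hlt | heq | hgt
      · exact hlt
      · exact absurd heq.symm hpq
      · exfalso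
        have := onecase y x z τ hxy.symm hzy hzx (fun u hu => (hτ u hu).symm) hjy hix hgt
        exact before_asymm h this
    · intro h
      exact onecase x y z τ hxy hzx hzy hτ hix hjy h
  -- assembly
  refine ⟨F, fun x i hi => ⟨hF1 x i hi, hFle x i⟩, ?_⟩
  intro x y σ hxy hcx hcy
  set τ := proj2 x y σ with hτdef
  have hτmem : ∀ u ∈ τ, u = x ∨ u = y := by
    intro u hu
    have := List.of_mem_filter hu
    simpa using this
  have hcxτ : τ.count x = σ.count x := List.count_filter (by simp)
  have hcyτ : τ.count y = σ.count y := List.count_filter (by simp)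
  have hp := pair x y τ hxy hτmem (hcxτ ▸ hcx) (hcyτ ▸ hcy)
  rw [hcxτ, hcyτ] at hp
  have hocc := occ_filter (p := fun z => decide (z = x ∨ z = y)) hxy (by simp) (by simp)
    (σ := σ) (k := F x (σ.count x) - 1) (l := F y (σ.count y) - 1)
    (by have := hF1 x (σ.count x) hcx; have := hFle x (σ.count x); omega)
    (by have := hF1 y (σ.count y) hcy; have := hFle y (σ.count y); omega)
  rw [occPos_eq_occ (hF1 y (σ.count y) hcy) (hFle y (σ.count y)),
    occPos_eq_occ (hF1 x (σ.count x) hcx) (hFle x (σ.count x))]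
  rw [hproj x y σ, ← hτdef]
  exact hp.trans (by rw [hτdef]; exact hocc.symm)
end
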